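/- arXiv:2312.02693 — 6 statements merged into one kernel-verified Lean document; each statement's English description precedes it below -/
import Mathlib

section
/- Let A and B be bounded operators with closed range on a Hilbert space H, with Moore-Penrose inverses A† and B†. Then A† − B† = −A†(A−B)B† + (A*A)†(A* − B*)(I − BB†) + (I − A†A)(A* − B*)(BB*)†. -/
open ContinuousLinearMap Filter MeasureTheory
open scoped InnerProductSpace

noncomputable section

variable {H : Type*} [NormedAddCommGroup H] [InnerProductSpace ℂ H] [CompleteSpace H]

/-- `B` is the Moore-Penrose inverse of `A`. -/
def IsMP (A B : H →L[ℂ] H) : Prop :=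
  A * B * A = A ∧ B * A * B = B ∧ IsSelfAdjoint (A * B) ∧ IsSelfAdjoint (B * A)

/-- Moore–Penrose inverses are unique. -/
lemma mp_unique (A B C : H →L[ℂ] H) (hB : IsMP A B) (hC : IsMP A C) : B = C := by
  obtain ⟨b1, b2, b3, b4⟩ := hB
  obtain ⟨c1, c2, c3, c4⟩ := hC
  have hAB : A * B = A * C := by
    calc A * B = star (A * B) := (b3.star_eq).symm
      _ = star ((A * C * A) * B) := by rw [c1]
      _ = star ((A * C) * (A * B)) := by rw [mul_assoc (A * C) A B]
      _ = star (A * B) * star (A * C) := star_mul _ _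
      _ = (A * B) * (A * C) := by rw [b3.star_eq, c3.star_eq]
      _ = (A * B * A) * C := by rw [← mul_assoc]
      _ = A * C := by rw [b1]
  have hBA : B * A = C * A := by
    calc B * A = B * (A * C * A) := by rw [c1]
      _ = (B * A) * (C * A) := by noncomm_ring
      _ = star (B * A) * star (C * A) := by rw [b4.star_eq, c4.star_eq]
      _ = star ((C * A) * (B * A)) := (star_mul _ _).symm
      _ = star (C * (A * B * A)) := by rw [show (C * A) * (B * A) = C * (A * B * A) from by noncomm_ring]
      _ = star (C * A) := by rw [b1]
      _ = C * A := c4.star_eq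
  calc B = B * A * B := b2.symm
    _ = C * A * B := by rw [hBA]
    _ = C * (A * B) := by rw [mul_assoc]
    _ = C * (A * C) := by rw [hAB]
    _ = C * A * C := by rw [← mul_assoc]
    _ = C := c2

lemma IsMP.star_mp {A B : H →L[ℂ] H} (h : IsMP A B) : IsMP (star A) (star B) := by
  obtain ⟨h1, h2, h3, h4⟩ := h
  refine ⟨?_, ?_, ?_, ?_⟩
  · calc star A * star B * star A = star (A * (B * A)) := by rw [star_mul, star_mul]
      _ = star A := by rw [← mul_assoc, h1]
  · calc star B * star A * star B = star (B * (A * B)) := by rw [star_mul, star_mul]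
      _ = star B := by rw [← mul_assoc, h2]
  · show IsSelfAdjoint (star A * star B)
    rw [← star_mul, h4.star_eq]; exact h4
  · show IsSelfAdjoint (star B * star A)
    rw [← star_mul, h3.star_eq]; exact h3

lemma IsMP.sq {A D : H →L[ℂ] H} (h : IsMP A D) : IsMP (star A * A) (D * star D) := by
  obtain ⟨h1, h2, h3, h4⟩ := h
  have k1 : star A * (A * D) = star A := by
    calc star A * (A * D) = star A * star (A * D) := by rw [h3.star_eq]
      _ = star ((A * D) * A) := (star_mul _ _).symm
      _ = star A := by rw [h1]
  have k2 : D * (star D * star A) = D := by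
    calc D * (star D * star A) = D * star (A * D) := by rw [star_mul]
      _ = D * (A * D) := by rw [h3.star_eq]
      _ = D := by rw [← mul_assoc, h2]
  have k3 : D * A * star A = star A := by
    calc D * A * star A = star (D * A) * star A := by rw [h4.star_eq]
      _ = star (A * (D * A)) := (star_mul _ _).symm
      _ = star A := by rw [← mul_assoc, h1]
  have hXY : (star A * A) * (D * star D) = D * A := by
    calc (star A * A) * (D * star D) = (star A * (A * D)) * star D := by noncomm_ring
      _ = star A * star D := by rw [k1]
      _ = star (D * A) := (star_mul _ _).symm
      _ = D * A := h4.star_eq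
  have hYX : (D * star D) * (star A * A) = D * A := by
    calc (D * star D) * (star A * A) = (D * (star D * star A)) * A := by noncomm_ring
      _ = D * A := by rw [k2]
  refine ⟨?_, ?_, ?_, ?_⟩
  · calc (star A * A) * (D * star D) * (star A * A) = (D * A) * (star A * A) := by rw [hXY]
      _ = (D * A * star A) * A := by noncomm_ring
      _ = star A * A := by rw [k3]
  · calc (D * star D) * (star A * A) * (D * star D) = (D * A) * (D * star D) := by rw [hYX]
      _ = (D * A * D) * star D := by noncomm_ring
      _ = D * star D := by rw [h2]
  · rw [hXY]; exact h4
  · rw [hYX]; exact h4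

theorem wedin_identity (A B Adag Bdag AsAdag BBsdag : H →L[ℂ] H)
    (hAcr : IsClosed (LinearMap.range (A : H →ₗ[ℂ] H) : Set H))
    (hBcr : IsClosed (LinearMap.range (B : H →ₗ[ℂ] H) : Set H))
    (hA : IsMP A Adag) (hB : IsMP B Bdag)
    (hAsA : IsMP (adjoint A * A) AsAdag)
    (hBBs : IsMP (B * adjoint B) BBsdag) :
    Adag - Bdag = -(Adag * (A - B) * Bdag)
      + AsAdag * (adjoint A - adjoint B) * (1 - B * Bdag)
      + (1 - Adag * A) * (adjoint A - adjoint B) * BBsdag := by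
  simp only [← ContinuousLinearMap.star_eq_adjoint] at *
  set D := Adag
  set E := Bdag
  -- identify the two auxiliary pseudoinverses
  have hAs : AsAdag = D * star D := mp_unique _ _ _ hAsA hA.sq
  have hBB' : IsMP (B * star B) (star E * E) := by
    have := hB.star_mp.sq
    simpa [star_star] using this
  have hBs : BBsdag = star E * E := mp_unique _ _ _ hBBs hBB'
  obtain ⟨a1, a2, a3, a4⟩ := hA
  obtain ⟨b1, b2, b3, b4⟩ := hB
  -- key algebraic facts
  have k2 : D * (star D * star A) = D := by
    calc D * (star D * star A) = D * star (A * D) := by rw [star_mul]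
      _ = D * (A * D) := by rw [a3.star_eq]
      _ = D := by rw [← mul_assoc, a2]
  have k3 : D * A * star A = star A := by
    calc D * A * star A = star (D * A) * star A := by rw [a4.star_eq]
      _ = star (A * (D * A)) := (star_mul _ _).symm
      _ = star A := by rw [← mul_assoc, a1]
  have g1 : star B * (B * E) = star B := by
    calc star B * (B * E) = star B * star (B * E) := by rw [b3.star_eq]
      _ = star ((B * E) * B) := (star_mul _ _).symm
      _ = star B := by rw [b1]
  have g2 : star B * (star E * E) = E := by
    calc star B * (star E * E) = (star B * star E) * E := by rw [← mul_assoc]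
      _ = star (E * B) * E := by rw [star_mul]
      _ = (E * B) * E := by rw [b4.star_eq]
      _ = E := b2
  rw [hAs, hBs]
  have T2 : D * star D * (star A - star B) * (1 - B * E) = D - D * (B * E) := by
    have e : D * star D * (star A - star B) * (1 - B * E)
        = (D * (star D * star A)) - (D * (star D * star A)) * (B * E)
          - (D * star D) * star B + (D * star D) * (star B * (B * E)) := by
      noncomm_ring
    rw [e, k2, g1]
    abel
  have T3 : (1 - D * A) * (star A - star B) * (star E * E) = D * A * E - E := by
    have e : (1 - D * A) * (star A - star B) * (star E * E)
        = star A * (star E * E) - (D * A * star A) * (star E * E)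
          - star B * (star E * E) + (D * A) * (star B * (star E * E)) := by
      noncomm_ring
    rw [e, k3, g2]
    noncomm_ring
  rw [T2, T3]
  noncomm_ring
end
end

section
/- Let A, B be complex matrices of the same size with rank(A) = rank(B) and ‖A − B‖ < ‖A†‖⁻¹ (operator norm). Then ‖B†‖ ≤ ‖A†‖ / (1 − ‖A†‖·‖A − B‖). -/
open ContinuousLinearMap

noncomputable section

/-- `B` is the Moore-Penrose inverse of `A` (operators between Euclidean spaces). -/
def IsMPMat {m n : ℕ} (A : EuclideanSpace ℂ (Fin n) →L[ℂ] EuclideanSpace ℂ (Fin m))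
    (B : EuclideanSpace ℂ (Fin m) →L[ℂ] EuclideanSpace ℂ (Fin n)) : Prop :=
  A ∘L B ∘L A = A ∧ B ∘L A ∘L B = B ∧ IsSelfAdjoint (A ∘L B) ∧ IsSelfAdjoint (B ∘L A)

namespace WedinAux

variable {m n : ℕ}

local notation "E" n => EuclideanSpace ℂ (Fin n)

/-- A finite-dimensional operator attains its norm. -/
lemma exists_norm_attained (f : (E n) →L[ℂ] (E m)) (hf : f ≠ 0) :
    ∃ x : E n, ‖x‖ = 1 ∧ ‖f x‖ = ‖f‖ := by
  obtain ⟨v, hv⟩ : ∃ v, f v ≠ 0 := by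
    by_contra h
    push_neg at h
    exact hf (ContinuousLinearMap.ext fun x => by simp [h x])
  have hv0 : v ≠ 0 := fun h => hv (by simp [h])
  haveI : Nontrivial (E n) := ⟨v, 0, hv0⟩
  obtain ⟨x₀, hx₀mem, hmax⟩ :=
    (isCompact_sphere (0 : E n) 1).exists_isMaxOn
      (NormedSpace.sphere_nonempty.mpr zero_le_one)
      ((continuous_norm.comp f.continuous).continuousOn)
  have hx₀ : ‖x₀‖ = 1 := by simpa using mem_sphere_zero_iff_norm.mp hx₀mem
  refine ⟨x₀, hx₀, le_antisymm (f.unit_le_opNorm x₀ hx₀.le) ?_⟩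
  refine f.opNorm_le_bound (norm_nonneg _) fun x => ?_
  rcases eq_or_ne x 0 with rfl | hx
  · simp
  · have hxn : ‖x‖ ≠ 0 := norm_ne_zero_iff.mpr hx
    set c : ℂ := (‖x‖ : ℂ)⁻¹ with hc
    have hcx : c • x ∈ Metric.sphere (0 : E n) 1 := by
      simp [mem_sphere_zero_iff_norm, norm_smul, hc, norm_inv, hxn]
    have h1 : ‖f (c • x)‖ ≤ ‖f x₀‖ := hmax hcx
    have h2 : ‖f (c • x)‖ = ‖x‖⁻¹ * ‖f x‖ := by
      rw [map_smul, norm_smul, hc]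
      simp
    rw [h2] at h1
    calc ‖f x‖ = ‖x‖ * (‖x‖⁻¹ * ‖f x‖) := by field_simp
      _ ≤ ‖x‖ * ‖f x₀‖ := by
          exact mul_le_mul_of_nonneg_left h1 (norm_nonneg _)
      _ = ‖f x₀‖ * ‖x‖ := mul_comm _ _

/-- If `f ∘L (g ∘L f) = f` then `rank f ≤ rank g`. -/
lemma finrank_range_le (f : (E n) →L[ℂ] (E m)) (g : (E m) →L[ℂ] (E n))
    (h : f ∘L (g ∘L f) = f) :
    Module.finrank ℂ (LinearMap.range (f : (E n) →ₗ[ℂ] (E m))) ≤ Module.finrank ℂ (LinearMap.range (g : (E m) →ₗ[ℂ] (E n))) := by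
  have step1 : LinearMap.range (f : (E n) →ₗ[ℂ] (E m)) ≤
      Submodule.map (f : (E n) →ₗ[ℂ] (E m)) (LinearMap.range (g ∘L f : (E n) →ₗ[ℂ] (E n))) := by
    rintro y hy
    obtain ⟨x, rfl⟩ := LinearMap.mem_range.mp hy
    have hx : f x = f ((g ∘L f) x) := by
      conv_lhs => rw [← h]
      rfl
    rw [ContinuousLinearMap.coe_coe, hx]
    exact Submodule.mem_map_of_mem (LinearMap.mem_range.mpr ⟨x, rfl⟩)
  have step3 : LinearMap.range (g ∘L f : (E n) →ₗ[ℂ] (E n)) ≤ LinearMap.range (g : (E m) →ₗ[ℂ] (E n)) := by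
    rintro y hy
    obtain ⟨x, rfl⟩ := LinearMap.mem_range.mp hy
    exact LinearMap.mem_range.mpr ⟨f x, rfl⟩
  calc Module.finrank ℂ (LinearMap.range (f : (E n) →ₗ[ℂ] (E m)))
      ≤ Module.finrank ℂ (Submodule.map (f : (E n) →ₗ[ℂ] (E m)) (LinearMap.range (g ∘L f : (E n) →ₗ[ℂ] (E n)))) :=
        Submodule.finrank_mono step1
    _ ≤ Module.finrank ℂ (LinearMap.range (g ∘L f : (E n) →ₗ[ℂ] (E n))) := Submodule.finrank_map_le _ _
    _ ≤ Module.finrank ℂ (LinearMap.range (g : (E m) →ₗ[ℂ] (E n))) := Submodule.finrank_mono step3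

/-- A self-adjoint idempotent has norm at most one on each vector. -/
lemma proj_apply_norm_le {R : (E m) →L[ℂ] (E m)} (hidem : R ∘L R = R)
    (hsa : IsSelfAdjoint R) (x : E m) : ‖R x‖ ≤ ‖x‖ := by
  rcases eq_or_ne (R x) 0 with h | h
  · simp [h]
  · have hR : ContinuousLinearMap.adjoint R = R := isSelfAdjoint_iff'.mp hsa
    have key : (‖R x‖ : ℝ) ^ 2 = RCLike.re (inner ℂ (R x) (R x)) := by
      rw [inner_self_eq_norm_sq (𝕜 := ℂ)]
    have hRR : R (R x) = R x := by
      have := congrArg (fun T => T x) hidem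
      simpa using this
    have h2 : (inner ℂ (R x) (R x)) = inner ℂ x (R x) := by
      have h5 := ContinuousLinearMap.adjoint_inner_right R x (R x)
      rw [hR, hRR] at h5
      exact h5.symm
    have h3 : RCLike.re (inner ℂ x (R x)) ≤ ‖x‖ * ‖R x‖ := by
      calc RCLike.re (inner ℂ x (R x)) ≤ ‖(inner ℂ x (R x))‖ := RCLike.re_le_norm _
        _ ≤ ‖x‖ * ‖R x‖ := norm_inner_le_norm _ _
    have h4 : ‖R x‖ ^ 2 ≤ ‖x‖ * ‖R x‖ := by rw [key, h2]; exact h3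
    have h5 : 0 < ‖R x‖ := norm_pos_iff.mpr h
    nlinarith

end WedinAux

set_option maxHeartbeats 1000000 in
theorem wedin_rank_bound {m n : ℕ}
    (A B : EuclideanSpace ℂ (Fin n) →L[ℂ] EuclideanSpace ℂ (Fin m))
    (Adag Bdag : EuclideanSpace ℂ (Fin m) →L[ℂ] EuclideanSpace ℂ (Fin n))
    (hA : IsMPMat A Adag) (hB : IsMPMat B Bdag)
    (hrank : Module.finrank ℂ (LinearMap.range (A : EuclideanSpace ℂ (Fin n) →ₗ[ℂ] EuclideanSpace ℂ (Fin m))) = Module.finrank ℂ (LinearMap.range (B : EuclideanSpace ℂ (Fin n) →ₗ[ℂ] EuclideanSpace ℂ (Fin m))))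
    (hlt : ‖A - B‖ < ‖Adag‖⁻¹) :
    ‖Bdag‖ ≤ ‖Adag‖ / (1 - ‖Adag‖ * ‖A - B‖) := by
  obtain ⟨hA1, hA2, hA3, hA4⟩ := hA
  obtain ⟨hB1, hB2, hB3, hB4⟩ := hB
  have hα : 0 < ‖Adag‖ := by
    rcases (norm_nonneg Adag).eq_or_lt with h | h
    · rw [← h, inv_zero] at hlt
      exact absurd hlt (not_lt.mpr (norm_nonneg _))
    · exact h
  have hden : 0 < 1 - ‖Adag‖ * ‖A - B‖ := by
    have h1 : ‖Adag‖ * ‖A - B‖ < ‖Adag‖ * ‖Adag‖⁻¹ := mul_lt_mul_of_pos_left hlt hα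
    rw [mul_inv_cancel₀ hα.ne'] at h1
    linarith
  rcases eq_or_ne Bdag 0 with rfl | hBd
  · simp only [norm_zero]
    exact div_nonneg (norm_nonneg _) hden.le
  have hβ : 0 < ‖Bdag‖ := norm_pos_iff.mpr hBd
  obtain ⟨x₀, hx₀, hBx₀⟩ := WedinAux.exists_norm_attained Bdag hBd
  have hBdx₀ : Bdag x₀ ≠ 0 := by
    intro h
    rw [h, norm_zero] at hBx₀
    exact hβ.ne' hBx₀.symm
  set u₀ : EuclideanSpace ℂ (Fin n) := ((‖Bdag‖ : ℂ))⁻¹ • Bdag x₀ with hu₀def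
  have hnc : ‖((‖Bdag‖ : ℂ))⁻¹‖ = ‖Bdag‖⁻¹ := by
    rw [norm_inv, Complex.norm_real, Real.norm_eq_abs, abs_of_pos hβ]
  have hu₀norm : ‖u₀‖ = 1 := by
    rw [hu₀def, norm_smul, hnc, hBx₀, inv_mul_cancel₀ hβ.ne']
  have hu₀ne : u₀ ≠ 0 := by
    intro h
    rw [h, norm_zero] at hu₀norm
    exact zero_ne_one hu₀norm
  -- B ∘L Bdag is a self-adjoint idempotent
  have hRidem : (B ∘L Bdag) ∘L (B ∘L Bdag) = B ∘L Bdag := by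
    calc (B ∘L Bdag) ∘L (B ∘L Bdag) = B ∘L (Bdag ∘L (B ∘L Bdag)) := by
          rw [ContinuousLinearMap.comp_assoc]
      _ = B ∘L Bdag := by rw [hB2]
  have hproj : ∀ x, ‖(B ∘L Bdag) x‖ ≤ ‖x‖ :=
    fun x => WedinAux.proj_apply_norm_le hRidem hB3 x
  have hBu₀ : ‖B u₀‖ ≤ ‖Bdag‖⁻¹ := by
    rw [hu₀def, map_smul, norm_smul, hnc]
    have h1 : ‖B (Bdag x₀)‖ ≤ 1 := by
      have := hproj x₀
      rw [hx₀] at this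
      simpa using this
    calc ‖Bdag‖⁻¹ * ‖B (Bdag x₀)‖ ≤ ‖Bdag‖⁻¹ * 1 :=
          mul_le_mul_of_nonneg_left h1 (inv_nonneg.mpr hβ.le)
      _ = ‖Bdag‖⁻¹ := mul_one _
  -- orthogonality of u₀ to ker B
  have hperp : ∀ k, B k = 0 → (inner ℂ k u₀) = 0 := by
    intro k hBk
    rw [hu₀def, inner_smul_right]
    suffices h : (inner ℂ k (Bdag x₀)) = 0 by rw [h, mul_zero]
    have h1 : Bdag x₀ = (Bdag ∘L B) (Bdag x₀) := by
      conv_lhs => rw [← hB2]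
      rfl
    rw [h1]
    have hQ : ContinuousLinearMap.adjoint (Bdag ∘L B) = Bdag ∘L B :=
      ContinuousLinearMap.isSelfAdjoint_iff'.mp hB4
    rw [← hQ, ContinuousLinearMap.adjoint_inner_right]
    have h2 : (Bdag ∘L B) k = 0 := by
      rw [ContinuousLinearMap.comp_apply, hBk, map_zero]
    rw [h2, inner_zero_left]
  -- rank facts
  have hSrank : Module.finrank ℂ (LinearMap.range (Adag : EuclideanSpace ℂ (Fin m) →ₗ[ℂ] EuclideanSpace ℂ (Fin n))) =
      Module.finrank ℂ (LinearMap.range (B : EuclideanSpace ℂ (Fin n) →ₗ[ℂ] EuclideanSpace ℂ (Fin m))) := by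
    have e1 := WedinAux.finrank_range_le Adag A hA2
    have e2 := WedinAux.finrank_range_le A Adag hA1
    rw [← hrank]
    exact le_antisymm e1 e2
  have hrangeB : LinearMap.range ((B : EuclideanSpace ℂ (Fin n) →ₗ[ℂ] EuclideanSpace ℂ (Fin m)))
      = LinearMap.range (B : EuclideanSpace ℂ (Fin n) →ₗ[ℂ] EuclideanSpace ℂ (Fin m)) := by
    ext y
    simp [LinearMap.mem_range]
  have hkerB : LinearMap.ker ((B : EuclideanSpace ℂ (Fin n) →ₗ[ℂ] EuclideanSpace ℂ (Fin m)))
      = LinearMap.ker (B : EuclideanSpace ℂ (Fin n) →ₗ[ℂ] EuclideanSpace ℂ (Fin m)) := by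
    ext y
    simp [LinearMap.mem_ker]
  have hKrank : Module.finrank ℂ (LinearMap.range (B : EuclideanSpace ℂ (Fin n) →ₗ[ℂ] EuclideanSpace ℂ (Fin m))) +
      Module.finrank ℂ (LinearMap.ker (B : EuclideanSpace ℂ (Fin n) →ₗ[ℂ] EuclideanSpace ℂ (Fin m))) = n := by
    have h0 := LinearMap.finrank_range_add_finrank_ker
      ((B : EuclideanSpace ℂ (Fin n) →ₗ[ℂ] EuclideanSpace ℂ (Fin m)))
    rw [hrangeB, hkerB] at h0
    rw [h0, finrank_euclideanSpace_fin]
  -- u₀ is not in ker B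
  have hu₀K : u₀ ∉ LinearMap.ker (B : EuclideanSpace ℂ (Fin n) →ₗ[ℂ] EuclideanSpace ℂ (Fin m)) := by
    intro hmem
    have h0 : B u₀ = 0 := LinearMap.mem_ker.mp hmem
    rw [hu₀def, map_smul, smul_eq_zero] at h0
    rcases h0 with h0 | h0
    · exact (inv_ne_zero (by exact_mod_cast hβ.ne')) h0
    · have h1 : Bdag x₀ = 0 := by
        conv_lhs => rw [← hB2]
        rw [ContinuousLinearMap.comp_apply, ContinuousLinearMap.comp_apply, h0, map_zero]
      exact hBdx₀ h1
  -- dimension of W := ker B ⊔ span {u₀}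
  have hinf : LinearMap.ker (B : EuclideanSpace ℂ (Fin n) →ₗ[ℂ] EuclideanSpace ℂ (Fin m)) ⊓ (ℂ ∙ u₀) = ⊥ := by
    rw [Submodule.eq_bot_iff]
    rintro z ⟨hzK, hzs⟩
    obtain ⟨c, rfl⟩ := Submodule.mem_span_singleton.mp hzs
    rcases eq_or_ne c 0 with rfl | hc
    · simp
    · exfalso
      apply hu₀K
      have := (LinearMap.ker (B : EuclideanSpace ℂ (Fin n) →ₗ[ℂ] EuclideanSpace ℂ (Fin m))).smul_mem c⁻¹ hzK
      rwa [smul_smul, inv_mul_cancel₀ hc, one_smul] at this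
  have hWrank : Module.finrank ℂ ((LinearMap.ker (B : EuclideanSpace ℂ (Fin n) →ₗ[ℂ] EuclideanSpace ℂ (Fin m)) ⊔ (ℂ ∙ u₀) : Submodule ℂ _)) =
      Module.finrank ℂ (LinearMap.ker (B : EuclideanSpace ℂ (Fin n) →ₗ[ℂ] EuclideanSpace ℂ (Fin m))) + 1 := by
    have h0 := Submodule.finrank_sup_add_finrank_inf_eq (LinearMap.ker (B : EuclideanSpace ℂ (Fin n) →ₗ[ℂ] EuclideanSpace ℂ (Fin m))) (ℂ ∙ u₀)
    rw [hinf, finrank_bot, add_zero, finrank_span_singleton hu₀ne] at h0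
    exact h0
  -- find a nonzero w in range Adag ⊓ W
  have hsup := Submodule.finrank_sup_add_finrank_inf_eq
    (LinearMap.range (Adag : EuclideanSpace ℂ (Fin m) →ₗ[ℂ] EuclideanSpace ℂ (Fin n))) (LinearMap.ker (B : EuclideanSpace ℂ (Fin n) →ₗ[ℂ] EuclideanSpace ℂ (Fin m)) ⊔ (ℂ ∙ u₀))
  have hle : Module.finrank ℂ
      ((LinearMap.range (Adag : EuclideanSpace ℂ (Fin m) →ₗ[ℂ] EuclideanSpace ℂ (Fin n)) ⊔ (LinearMap.ker (B : EuclideanSpace ℂ (Fin n) →ₗ[ℂ] EuclideanSpace ℂ (Fin m)) ⊔ (ℂ ∙ u₀)) : Submodule ℂ _)) ≤ n := by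
    have := Submodule.finrank_le
      ((LinearMap.range (Adag : EuclideanSpace ℂ (Fin m) →ₗ[ℂ] EuclideanSpace ℂ (Fin n)) ⊔ (LinearMap.ker (B : EuclideanSpace ℂ (Fin n) →ₗ[ℂ] EuclideanSpace ℂ (Fin m)) ⊔ (ℂ ∙ u₀)) : Submodule ℂ _))
    rwa [finrank_euclideanSpace_fin] at this
  have hpos : 0 < Module.finrank ℂ
      ((LinearMap.range (Adag : EuclideanSpace ℂ (Fin m) →ₗ[ℂ] EuclideanSpace ℂ (Fin n)) ⊓ (LinearMap.ker (B : EuclideanSpace ℂ (Fin n) →ₗ[ℂ] EuclideanSpace ℂ (Fin m)) ⊔ (ℂ ∙ u₀)) : Submodule ℂ _)) := by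
    omega
  have hne : (LinearMap.range (Adag : EuclideanSpace ℂ (Fin m) →ₗ[ℂ] EuclideanSpace ℂ (Fin n)) ⊓ (LinearMap.ker (B : EuclideanSpace ℂ (Fin n) →ₗ[ℂ] EuclideanSpace ℂ (Fin m)) ⊔ (ℂ ∙ u₀)) : Submodule ℂ _) ≠ ⊥ := by
    intro h
    rw [h, finrank_bot] at hpos
    exact lt_irrefl 0 hpos
  obtain ⟨w, hwmem, hwne⟩ := Submodule.ne_bot_iff _ |>.mp hne
  obtain ⟨hwS, hwW⟩ := Submodule.mem_inf.mp hwmem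
  have hwpos : 0 < ‖w‖ := norm_pos_iff.mpr hwne
  -- w ∈ range Adag gives lower bound via A
  obtain ⟨y, hy⟩ := LinearMap.mem_range.mp hwS
  have hw1 : Adag (A w) = w := by
    rw [← hy]
    have h0 := congrArg (fun T => T y) hA2
    simpa using h0
  have hwA : ‖w‖ ≤ ‖Adag‖ * ‖A w‖ := by
    calc ‖w‖ = ‖Adag (A w)‖ := by rw [hw1]
      _ ≤ ‖Adag‖ * ‖A w‖ := Adag.le_opNorm _
  -- decompose w in W
  obtain ⟨k, hkK, s, hss, hksw⟩ := Submodule.mem_sup.mp hwW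
  obtain ⟨c, rfl⟩ := Submodule.mem_span_singleton.mp hss
  have hBk : B k = 0 := LinearMap.mem_ker.mp hkK
  have hBw : ‖B w‖ ≤ ‖c‖ * ‖Bdag‖⁻¹ := by
    have h0 : B w = c • B u₀ := by
      rw [← hksw, map_add, hBk, zero_add, map_smul]
    rw [h0, norm_smul]
    exact mul_le_mul_of_nonneg_left hBu₀ (norm_nonneg _)
  have hperp' : (inner ℂ k (c • u₀)) = 0 := by
    rw [inner_smul_right, hperp k hBk, mul_zero]
  have hpyth := norm_add_sq_eq_norm_sq_add_norm_sq_of_inner_eq_zero k (c • u₀) hperp'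
  have hcu : ‖c • u₀‖ = ‖c‖ := by rw [norm_smul, hu₀norm, mul_one]
  have hcw : ‖c‖ ≤ ‖w‖ := by
    have h0 : ‖w‖ * ‖w‖ = ‖k‖ * ‖k‖ + ‖c‖ * ‖c‖ := by
      rw [hcu] at hpyth
      rw [← hksw]
      exact hpyth
    have h1 : ‖c‖ * ‖c‖ ≤ ‖w‖ * ‖w‖ := by linarith [mul_self_nonneg ‖k‖]
    have h2 : ‖c‖ ^ 2 ≤ ‖w‖ ^ 2 := by rw [pow_two, pow_two]; exact h1
    exact le_of_pow_le_pow_left₀ two_ne_zero (norm_nonneg w) h2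
  -- combine
  have hAwB : ‖A w‖ ≤ ‖B w‖ + ‖A - B‖ * ‖w‖ := by
    have h0 : A w = (A - B) w + B w := by
      simp [ContinuousLinearMap.sub_apply]
    calc ‖A w‖ = ‖(A - B) w + B w‖ := by rw [h0]
      _ ≤ ‖(A - B) w‖ + ‖B w‖ := norm_add_le _ _
      _ ≤ ‖A - B‖ * ‖w‖ + ‖B w‖ := by
          exact add_le_add_left ((A - B).le_opNorm w) _
      _ = ‖B w‖ + ‖A - B‖ * ‖w‖ := add_comm _ _
  have key : ‖w‖ ≤ ‖Adag‖ * (‖w‖ * ‖Bdag‖⁻¹ + ‖A - B‖ * ‖w‖) := by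
    have h1 : ‖B w‖ ≤ ‖w‖ * ‖Bdag‖⁻¹ := by
      calc ‖B w‖ ≤ ‖c‖ * ‖Bdag‖⁻¹ := hBw
        _ ≤ ‖w‖ * ‖Bdag‖⁻¹ := mul_le_mul_of_nonneg_right hcw (inv_nonneg.mpr hβ.le)
    calc ‖w‖ ≤ ‖Adag‖ * ‖A w‖ := hwA
      _ ≤ ‖Adag‖ * (‖B w‖ + ‖A - B‖ * ‖w‖) :=
          mul_le_mul_of_nonneg_left hAwB hα.le
      _ ≤ ‖Adag‖ * (‖w‖ * ‖Bdag‖⁻¹ + ‖A - B‖ * ‖w‖) :=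
          mul_le_mul_of_nonneg_left (add_le_add_left h1 _) hα.le
  have h10 : 1 ≤ ‖Adag‖ * ‖Bdag‖⁻¹ + ‖Adag‖ * ‖A - B‖ := by
    have h11 : 1 * ‖w‖ ≤ (‖Adag‖ * ‖Bdag‖⁻¹ + ‖Adag‖ * ‖A - B‖) * ‖w‖ := by
      rw [one_mul]
      calc ‖w‖ ≤ ‖Adag‖ * (‖w‖ * ‖Bdag‖⁻¹ + ‖A - B‖ * ‖w‖) := key
        _ = (‖Adag‖ * ‖Bdag‖⁻¹ + ‖Adag‖ * ‖A - B‖) * ‖w‖ := by ring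
    exact le_of_mul_le_mul_right h11 hwpos
  rw [le_div_iff₀ hden]
  have h12 : ‖Bdag‖ * 1 ≤ ‖Bdag‖ * (‖Adag‖ * ‖Bdag‖⁻¹ + ‖Adag‖ * ‖A - B‖) :=
    mul_le_mul_of_nonneg_left h10 hβ.le
  have h13 : ‖Bdag‖ * (‖Adag‖ * ‖Bdag‖⁻¹) = ‖Adag‖ := by
    rw [mul_left_comm, mul_inv_cancel₀ hβ.ne', mul_one]
  rw [mul_one, mul_add, h13] at h12
  have h14 : ‖Bdag‖ * (1 - ‖Adag‖ * ‖A - B‖)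
      = ‖Bdag‖ - ‖Bdag‖ * (‖Adag‖ * ‖A - B‖) := by ring
  rw [h14]
  linarith [h12]
end
end

section
/- Let S be a symmetrically-normed ideal on a Hilbert space and A, B closed range bounded operators with A − B ∈ S. Then A† − B† ∈ S, P_{ran A} − P_{ran B} ∈ S, and P_{ker A} − P_{ker B} ∈ S. -/
open ContinuousLinearMap Filter MeasureTheory
open scoped InnerProductSpace

noncomputable section

variable {H : Type*} [NormedAddCommGroup H] [InnerProductSpace ℂ H] [CompleteSpace H]

/-- A symmetrically-normed ideal of bounded operators on `H`. -/
structure SymmIdeal (H : Type*) [NormedAddCommGroup H] [InnerProductSpace ℂ H]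
    [CompleteSpace H] where
  mem : (H →L[ℂ] H) → Prop
  snorm : (H →L[ℂ] H) → ℝ
  zero_mem : mem 0
  neg_mem : ∀ {X}, mem X → mem (-X)
  add_mem : ∀ {X Y}, mem X → mem Y → mem (X + Y)
  smul_mem : ∀ (c : ℂ) {X}, mem X → mem (c • X)
  mul_mem_left : ∀ (A : H →L[ℂ] H) {X}, mem X → mem (A * X)
  mul_mem_right : ∀ (A : H →L[ℂ] H) {X}, mem X → mem (X * A)
  snorm_nonneg : ∀ X, 0 ≤ snorm X
  snorm_triangle : ∀ X Y, snorm (X + Y) ≤ snorm X + snorm Y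
  snorm_symm : ∀ (A C X : H →L[ℂ] H), mem X → snorm (A * X * C) ≤ ‖A‖ * snorm X * ‖C‖
  opNorm_le_snorm : ∀ {X}, mem X → ‖X‖ ≤ snorm X

/-- `P` is the orthogonal projection onto the subspace `M`. -/
def IsOrthoProjOnto (P : H →L[ℂ] H) (M : Submodule ℂ H) : Prop :=
  IsSelfAdjoint P ∧ P * P = P ∧ LinearMap.range (P : H →ₗ[ℂ] H) = M

set_option maxHeartbeats 1000000 in
set_option synthInstance.maxHeartbeats 400000 in
/-- Polar-decomposition-style sandwich: the adjoint of `T` is `W T W` for a suitable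
contraction `W` (the adjoint of the polar partial isometry). -/
private lemma exists_sandwich (T : H →L[ℂ] H) :
    ∃ W : H →L[ℂ] H, adjoint T = W * T * W := by
  classical
  have hTT : (0 : H →L[ℂ] H) ≤ adjoint T * T := by
    simpa [star_eq_adjoint] using star_mul_self_nonneg T
  set R : H →L[ℂ] H := CFC.sqrt (adjoint T * T) with hRdef
  have hR0 : (0 : H →L[ℂ] H) ≤ R := CFC.sqrt_nonneg _
  have hRsa : IsSelfAdjoint R := hR0.isSelfAdjoint
  have hR2 : R * R = adjoint T * T := CFC.sqrt_mul_sqrt_self _ hTT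
  have hRadj : adjoint R = R := by
    have := hRsa.star_eq
    rwa [star_eq_adjoint] at this
  have hRR : ∀ x : H, R (R x) = adjoint T (T x) := by
    intro x
    calc R (R x) = (R * R) x := rfl
      _ = (adjoint T * T) x := by rw [hR2]
      _ = adjoint T (T x) := rfl
  have hnorm : ∀ x, ‖R x‖ = ‖T x‖ := by
    intro x
    have h1 : ⟪R x, R x⟫_ℂ = ⟪T x, T x⟫_ℂ := by
      rw [← ContinuousLinearMap.adjoint_inner_right R,
        ← ContinuousLinearMap.adjoint_inner_right T, hRadj]
      congr 1
      exact hRR x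
    have h3 : (‖R x‖ : ℝ) ^ 2 = (‖T x‖ : ℝ) ^ 2 := by
      rw [← inner_self_eq_norm_sq (𝕜 := ℂ), ← inner_self_eq_norm_sq (𝕜 := ℂ), h1]
    nlinarith [norm_nonneg (R x), norm_nonneg (T x)]
  have hker : ∀ x y : H, T x = T y → R x = R y := by
    intro x y hxy
    have h0 : ‖R x - R y‖ = 0 := by
      rw [← map_sub, hnorm, map_sub, hxy, sub_self, norm_zero]
    have := norm_eq_zero.mp h0
    exact sub_eq_zero.mp this
  set N : Submodule ℂ H := LinearMap.range (T : H →ₗ[ℂ] H) with hN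
  have hmemN : ∀ x : H, T x ∈ N := fun x => LinearMap.mem_range_self _ x
  choose g hg using fun y : N => LinearMap.mem_range.mp y.2
  replace hg : ∀ y : N, T (g y) = y := hg
  have hgx : ∀ x : H, R (g ⟨T x, hmemN x⟩) = R x := fun x => hker _ _ (hg ⟨T x, hmemN x⟩)
  let f₀ : N →ₗ[ℂ] H :=
    { toFun := fun y => R (g y)
      map_add' := by
        intro y z
        have h1 : T (g (y + z)) = T (g y + g z) := by
          rw [map_add, hg, hg, hg]
          simp
        show R (g (y + z)) = R (g y) + R (g z)
        rw [hker _ _ h1, map_add]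
      map_smul' := by
        intro c y
        have h1 : T (g (c • y)) = T (c • g y) := by
          rw [_root_.map_smul, hg, hg]
          simp
        show R (g (c • y)) = c • R (g y)
        rw [hker _ _ h1, _root_.map_smul] }
  have hf₀bound : ∀ y : N, ‖f₀ y‖ ≤ 1 * ‖y‖ := by
    intro y
    have h1 : f₀ y = R (g y) := rfl
    have h2 : ‖(y : H)‖ = ‖y‖ := rfl
    rw [h1, hnorm, hg y, one_mul, h2]
  let φ : N →L[ℂ] H := f₀.mkContinuous 1 hf₀bound
  set M : Submodule ℂ H := N.topologicalClosure with hM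
  haveI : CompleteSpace M := (Submodule.isClosed_topologicalClosure N).completeSpace_coe
  let e₀ : N →ₗ[ℂ] M := Submodule.inclusion N.le_topologicalClosure
  have he₀coe : ∀ y : N, ((e₀ y : M) : H) = (y : H) := fun y => rfl
  let e : N →L[ℂ] M := e₀.mkContinuous 1 (by
    intro y
    have h2 : ‖e₀ y‖ = ‖(y : H)‖ := by rw [show ‖e₀ y‖ = ‖((e₀ y : M) : H)‖ from rfl, he₀coe]
    rw [h2, one_mul]
    rfl)
  have hecoe : ∀ y : N, ((e y : M) : H) = (y : H) := fun y => rfl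
  have he_iso : Isometry e := AddMonoidHomClass.isometry_of_norm e (by
    intro y
    rw [show ‖e y‖ = ‖((e y : M) : H)‖ from rfl, hecoe]
    rfl)
  have h_dense : DenseRange e := by
    intro y
    rw [closure_subtype]
    have himg : (Subtype.val '' Set.range ⇑e) = (N : Set H) := by
      ext z
      constructor
      · rintro ⟨w, ⟨u, rfl⟩, rfl⟩
        rw [hecoe u]
        exact u.2
      · intro hz
        exact ⟨e ⟨z, hz⟩, ⟨⟨z, hz⟩, rfl⟩, hecoe _⟩
    rw [himg, ← Submodule.topologicalClosure_coe]
    exact y.2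
  let ψ : M →L[ℂ] H := φ.extend e
  let W : H →L[ℂ] H := ψ.comp (M.orthogonalProjectionOnto)
  have hWT : ∀ x : H, W (T x) = R x := by
    intro x
    have hTxM : T x ∈ M := N.le_topologicalClosure (hmemN x)
    have hproj : M.orthogonalProjectionOnto (T x) = ⟨T x, hTxM⟩ :=
      Subtype.ext (Submodule.starProjection_eq_self_iff.mpr hTxM)
    have he' : e ⟨T x, hmemN x⟩ = ⟨T x, hTxM⟩ := Subtype.ext (hecoe _)
    calc W (T x) = ψ (M.orthogonalProjectionOnto (T x)) := rfl
      _ = ψ (e ⟨T x, hmemN x⟩) := by rw [hproj, he']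
      _ = φ ⟨T x, hmemN x⟩ := ContinuousLinearMap.extend_eq φ h_dense he_iso.isUniformInducing _
      _ = R x := hgx x
  have hWzero : ∀ z : H, z ∈ Mᗮ → W z = 0 := by
    intro z hz
    have h0 : M.orthogonalProjectionOnto z = 0 :=
      Submodule.orthogonalProjectionOnto_apply_of_mem_orthogonal hz
    calc W z = ψ (M.orthogonalProjectionOnto z) := rfl
      _ = ψ 0 := by rw [h0]
      _ = 0 := map_zero ψ
  have hadj0 : ∀ z : H, z ∈ Mᗮ → adjoint T z = 0 := by
    intro z hz
    have hzN : z ∈ Nᗮ := Submodule.orthogonal_le N.le_topologicalClosure hz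
    have h0 : ⟪adjoint T z, adjoint T z⟫_ℂ = 0 := by
      rw [ContinuousLinearMap.adjoint_inner_left]
      exact (Submodule.mem_orthogonal' N z).mp hzN _ (hmemN _)
    exact inner_self_eq_zero.mp h0
  have hRW : ∀ z : H, R (W z) = adjoint T z := by
    have hclosed : IsClosed {z : H | R (W z) = adjoint T z} :=
      isClosed_eq (R.continuous.comp W.continuous) (adjoint T).continuous
    have hsubN : (N : Set H) ⊆ {z : H | R (W z) = adjoint T z} := by
      rintro _ ⟨x, rfl⟩
      show R (W (T x)) = adjoint T (T x)
      rw [hWT]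
      exact hRR x
    have hsubM : (M : Set H) ⊆ {z : H | R (W z) = adjoint T z} := by
      rw [hM, Submodule.topologicalClosure_coe]
      exact closure_minimal hsubN hclosed
    intro z
    have e1 : (M.orthogonalProjectionOnto z : H) + (z - M.orthogonalProjectionOnto z) = z := by abel
    have h2 : z - (M.orthogonalProjectionOnto z : H) ∈ Mᗮ :=
      Submodule.sub_starProjection_mem_orthogonal (K := M) z
    calc R (W z)
        = R (W ((M.orthogonalProjectionOnto z : H) + (z - M.orthogonalProjectionOnto z))) := by rw [e1]
      _ = R (W ((M.orthogonalProjectionOnto z : H))) + R (W (z - M.orthogonalProjectionOnto z)) := by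
          rw [map_add, map_add]
      _ = adjoint T ((M.orthogonalProjectionOnto z : H)) + adjoint T (z - M.orthogonalProjectionOnto z) := by
          rw [hsubM (SetLike.coe_mem _), hWzero _ h2, hadj0 _ h2, map_zero]
      _ = adjoint T z := by rw [← map_add, e1]
  refine ⟨W, ?_⟩
  ext z
  calc adjoint T z = R (W z) := (hRW z).symm
    _ = W (T (W z)) := (hWT (W z)).symm
    _ = (W * T * W) z := rfl

/-- Two-sided ideals of `B(H)` are closed under adjoints. -/
private lemma SymmIdeal.adj_mem (S : SymmIdeal H) {X : H →L[ℂ] H} (h : S.mem X) :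
    S.mem (star X) := by
  obtain ⟨W, hW⟩ := exists_sandwich X
  rw [star_eq_adjoint, hW]
  exact S.mul_mem_right W (S.mul_mem_left W h)

private lemma orthoProj_unique {P P' : H →L[ℂ] H} {M : Submodule ℂ H}
    (hP : IsOrthoProjOnto P M) (hP' : IsOrthoProjOnto P' M) : P = P' := by
  obtain ⟨hP1, hP2, hP3⟩ := hP
  obtain ⟨hP'1, hP'2, hP'3⟩ := hP'
  have hfix : ∀ (Q : H →L[ℂ] H), Q * Q = Q → ∀ y ∈ LinearMap.range (Q : H →ₗ[ℂ] H), Q y = y := by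
    intro Q hQ y hy
    obtain ⟨z, rfl⟩ := LinearMap.mem_range.mp hy
    calc Q (Q z) = (Q * Q) z := rfl
      _ = Q z := by rw [hQ]
  have h1 : P' * P = P := by
    ext x
    have hx : P x ∈ LinearMap.range (P' : H →ₗ[ℂ] H) := by
      rw [hP'3, ← hP3]; exact LinearMap.mem_range_self _ x
    exact hfix P' hP'2 (P x) hx
  have h2 : P * P' = P' := by
    ext x
    have hx : P' x ∈ LinearMap.range (P : H →ₗ[ℂ] H) := by
      rw [hP3, ← hP'3]; exact LinearMap.mem_range_self _ x
    exact hfix P hP2 (P' x) hx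
  have h3 := congrArg star h1
  rw [star_mul, hP1.star_eq, hP'1.star_eq, h2] at h3
  exact h3.symm

private lemma isOrthoProjOnto_range {A Adag : H →L[ℂ] H} (hA : IsMP A Adag) :
    IsOrthoProjOnto (A * Adag) (LinearMap.range (A : H →ₗ[ℂ] H)) := by
  obtain ⟨h1, h2, h3, h4⟩ := hA
  refine ⟨h3, ?_, ?_⟩
  · rw [← mul_assoc, h1]
  · apply le_antisymm
    · rintro y hy
      obtain ⟨x, rfl⟩ := LinearMap.mem_range.mp hy
      exact ⟨Adag x, rfl⟩
    · rintro y hy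
      obtain ⟨x, rfl⟩ := LinearMap.mem_range.mp hy
      refine ⟨A x, ?_⟩
      calc (A * Adag) (A x) = (A * Adag * A) x := rfl
        _ = A x := by rw [h1]

private lemma isOrthoProjOnto_ker {A Adag : H →L[ℂ] H} (hA : IsMP A Adag) :
    IsOrthoProjOnto (1 - Adag * A) (LinearMap.ker (A : H →ₗ[ℂ] H)) := by
  obtain ⟨h1, h2, h3, h4⟩ := hA
  refine ⟨((IsSelfAdjoint.one (R := H →L[ℂ] H)).sub h4), ?_, ?_⟩
  · have hQ : (Adag * A) * (Adag * A) = Adag * A := by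
      calc (Adag * A) * (Adag * A) = Adag * A * Adag * A := by rw [← mul_assoc]
        _ = Adag * A := by rw [h2]
    simp only [sub_mul, mul_sub, one_mul, mul_one, hQ]
    abel
  · have hzero : A * (1 - Adag * A) = 0 := by
      rw [mul_sub, mul_one, ← mul_assoc, h1, sub_self]
    apply le_antisymm
    · rintro y hy
      obtain ⟨x, rfl⟩ := LinearMap.mem_range.mp hy
      rw [LinearMap.mem_ker]
      calc A ((1 - Adag * A) x) = (A * (1 - Adag * A)) x := rfl
        _ = (0 : H →L[ℂ] H) x := by rw [hzero]
        _ = 0 := rfl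
    · intro y hy
      have hy' : A y = 0 := LinearMap.mem_ker.mp hy
      refine ⟨y, ?_⟩
      calc (1 - Adag * A) y = y - Adag (A y) := rfl
        _ = y := by rw [hy', map_zero, sub_zero]

theorem mp_and_projections_mem_ideal (S : SymmIdeal H) (A B Adag Bdag : H →L[ℂ] H)
    (hAcr : IsClosed (LinearMap.range (A : H →ₗ[ℂ] H) : Set H))
    (hBcr : IsClosed (LinearMap.range (B : H →ₗ[ℂ] H) : Set H))
    (hA : IsMP A Adag) (hB : IsMP B Bdag)
    (hmem : S.mem (A - B))
    (PrA PrB PkA PkB : H →L[ℂ] H)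
    (hPrA : IsOrthoProjOnto PrA (LinearMap.range (A : H →ₗ[ℂ] H)))
    (hPrB : IsOrthoProjOnto PrB (LinearMap.range (B : H →ₗ[ℂ] H)))
    (hPkA : IsOrthoProjOnto PkA (LinearMap.ker (A : H →ₗ[ℂ] H)))
    (hPkB : IsOrthoProjOnto PkB (LinearMap.ker (B : H →ₗ[ℂ] H))) :
    S.mem (Adag - Bdag) ∧ S.mem (PrA - PrB) ∧ S.mem (PkA - PkB) := by
  have hA1 := hA.1
  have hA2 := hA.2.1
  have hA3 := hA.2.2.1
  have hA4 := hA.2.2.2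
  have hB1 := hB.1
  have hB2 := hB.2.1
  have hB3 := hB.2.2.1
  have hB4 := hB.2.2.2
  have sub_mem : ∀ {X Y : H →L[ℂ] H}, S.mem X → S.mem Y → S.mem (X - Y) := by
    intro X Y hX hY
    rw [sub_eq_add_neg]
    exact S.add_mem hX (S.neg_mem hY)
  have hmem' : S.mem (B - A) := by
    have := S.neg_mem hmem
    rwa [neg_sub] at this
  -- annihilation identities
  have hB0 : (1 - B * Bdag) * B = 0 := by rw [sub_mul, one_mul, hB1, sub_self]
  have hA0 : (1 - A * Adag) * A = 0 := by rw [sub_mul, one_mul, hA1, sub_self]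
  have hBk : B * (1 - Bdag * B) = 0 := by rw [mul_sub, mul_one, ← mul_assoc, hB1, sub_self]
  have hAk : A * (1 - Adag * A) = 0 := by rw [mul_sub, mul_one, ← mul_assoc, hA1, sub_self]
  -- range-projection differences
  have m1 : S.mem ((1 - B * Bdag) * (A * Adag)) := by
    have e1 : (1 - B * Bdag) * (A - B) * Adag = (1 - B * Bdag) * (A * Adag) := by
      rw [mul_sub (1 - B * Bdag) A B, hB0, sub_zero, mul_assoc]
    rw [← e1]
    exact S.mul_mem_right Adag (S.mul_mem_left _ hmem)
  have m1' : S.mem ((A * Adag) * (1 - B * Bdag)) := by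
    have hst : star ((1 - B * Bdag) * (A * Adag)) = (A * Adag) * (1 - B * Bdag) := by
      rw [star_mul, hA3.star_eq, ((IsSelfAdjoint.one (R := H →L[ℂ] H)).sub hB3).star_eq]
    have := S.adj_mem m1
    rwa [hst] at this
  have m2 : S.mem ((1 - A * Adag) * (B * Bdag)) := by
    have e2 : (1 - A * Adag) * (B - A) * Bdag = (1 - A * Adag) * (B * Bdag) := by
      rw [mul_sub (1 - A * Adag) B A, hA0, sub_zero, mul_assoc]
    rw [← e2]
    exact S.mul_mem_right Bdag (S.mul_mem_left _ hmem')
  have hT : S.mem (A * Adag - B * Bdag) := by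
    have hid : A * Adag - B * Bdag
        = (A * Adag) * (1 - B * Bdag) - (1 - A * Adag) * (B * Bdag) := by
      simp only [mul_sub, sub_mul, mul_one, one_mul]
      abel
    rw [hid]
    exact sub_mem m1' m2
  -- kernel-projection differences
  have m3 : S.mem ((Adag * A) * (1 - Bdag * B)) := by
    have e3 : Adag * (A - B) * (1 - Bdag * B) = (Adag * A) * (1 - Bdag * B) := by
      rw [mul_assoc, mul_assoc, sub_mul, hBk, sub_zero]
    rw [← e3]
    exact S.mul_mem_right _ (S.mul_mem_left Adag hmem)
  have m4 : S.mem ((Bdag * B) * (1 - Adag * A)) := by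
    have e4 : Bdag * (B - A) * (1 - Adag * A) = (Bdag * B) * (1 - Adag * A) := by
      rw [mul_assoc, mul_assoc, sub_mul, hAk, sub_zero]
    rw [← e4]
    exact S.mul_mem_right _ (S.mul_mem_left Bdag hmem')
  have m4' : S.mem ((1 - Adag * A) * (Bdag * B)) := by
    have hst : star ((Bdag * B) * (1 - Adag * A)) = (1 - Adag * A) * (Bdag * B) := by
      rw [star_mul, hB4.star_eq, ((IsSelfAdjoint.one (R := H →L[ℂ] H)).sub hA4).star_eq]
    have := S.adj_mem m4
    rwa [hst] at this
  have hT' : S.mem (Adag * A - Bdag * B) := by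
    have hid : Adag * A - Bdag * B
        = (Adag * A) * (1 - Bdag * B) - (1 - Adag * A) * (Bdag * B) := by
      simp only [mul_sub, sub_mul, mul_one, one_mul]
      abel
    rw [hid]
    exact sub_mem m3 m4'
  -- the Moore-Penrose difference
  have hD : S.mem (Adag - Bdag) := by
    have c1 : Adag * (A * Adag - B * Bdag) = Adag - Adag * (B * Bdag) := by
      rw [mul_sub, ← mul_assoc, hA2]
    have c2 : (Bdag * B - Adag * A) * Bdag = Bdag - (Adag * A) * Bdag := by
      rw [sub_mul, hB2]
    have c3 : Adag * (A - B) * Bdag = (Adag * A) * Bdag - Adag * (B * Bdag) := by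
      rw [mul_sub, sub_mul, mul_assoc Adag B Bdag]
    have hid : Adag - Bdag
        = -(Adag * (A - B) * Bdag) + Adag * (A * Adag - B * Bdag)
          - (Bdag * B - Adag * A) * Bdag := by
      rw [c1, c2, c3]
      abel
    rw [hid]
    refine sub_mem (S.add_mem (S.neg_mem ?_) (S.mul_mem_left Adag hT)) (S.mul_mem_right Bdag ?_)
    · exact S.mul_mem_right Bdag (S.mul_mem_left Adag hmem)
    · have := S.neg_mem hT'
      rwa [neg_sub] at this
  refine ⟨hD, ?_, ?_⟩
  · have hPrA' : PrA = A * Adag := orthoProj_unique hPrA (isOrthoProjOnto_range hA)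
    have hPrB' : PrB = B * Bdag := orthoProj_unique hPrB (isOrthoProjOnto_range hB)
    rw [hPrA', hPrB']
    exact hT
  · have hPkA' : PkA = 1 - Adag * A := orthoProj_unique hPkA (isOrthoProjOnto_ker hA)
    have hPkB' : PkB = 1 - Bdag * B := orthoProj_unique hPkB (isOrthoProjOnto_ker hB)
    rw [hPkA', hPkB']
    have hid : (1 - Adag * A) - (1 - Bdag * B) = -(Adag * A - Bdag * B) := by abel
    rw [hid]
    exact S.neg_mem hT'
end
end

section
/- Let S be a symmetrically-normed ideal, B a closed range operator, and (B_n) a sequence of closed range operators with B_n − B ∈ S and ‖B_n − B‖_S → 0. If ker(B_n)^⊥ ∩ ker(B) = {0} for all sufficiently large n, then ‖B_n† − B†‖_S → 0. -/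
open ContinuousLinearMap Filter MeasureTheory
open scoped InnerProductSpace

noncomputable section

variable {H : Type*} [NormedAddCommGroup H] [InnerProductSpace ℂ H] [CompleteSpace H]

set_option synthInstance.maxHeartbeats 1000000
set_option maxHeartbeats 1000000

section AuxPolar

lemma prod3_le {a b c a' b' c' : ℝ} (ha : a ≤ a') (hb : b ≤ b') (hc : c ≤ c')
    (hb0 : 0 ≤ b) (hc0 : 0 ≤ c) (ha'0 : 0 ≤ a') (hb'0 : 0 ≤ b') : a * b * c ≤ a' * b' * c' :=
  mul_le_mul (mul_le_mul ha hb hb0 ha'0) hc hc0 (mul_nonneg ha'0 hb'0)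

variable {H : Type*} [NormedAddCommGroup H] [InnerProductSpace ℂ H] [CompleteSpace H]

lemma exists_conj_adjoint (X : H →L[ℂ] H) :
    ∃ W : H →L[ℂ] H, ‖W‖ ≤ 1 ∧ adjoint X = W * X * W := by
  classical
  set A : H →L[ℂ] H := CFC.sqrt (star X * X) with hA
  have hA2 : A * A = star X * X := CFC.sqrt_mul_sqrt_self _ (star_mul_self_nonneg X)
  have hAsa : IsSelfAdjoint A := (CFC.sqrt_nonneg (a := star X * X)).isSelfAdjoint
  have hAadj : adjoint A = A := by rw [← star_eq_adjoint]; exact hAsa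
  have hnorm : ∀ v, ‖A v‖ = ‖X v‖ := by
    intro v
    have h1 : ⟪A v, A v⟫_ℂ = ⟪X v, X v⟫_ℂ := by
      rw [← hAadj, adjoint_inner_left, hAadj]
      have h2 : A (A v) = (star X * X) v := by rw [← mul_apply_eq_comp, hA2]
      rw [h2, star_eq_adjoint, mul_apply_eq_comp, adjoint_inner_right]
    have h2 : ‖A v‖ * ‖A v‖ = ‖X v‖ * ‖X v‖ := by
      rw [← inner_self_eq_norm_mul_norm (𝕜 := ℂ), ← inner_self_eq_norm_mul_norm (𝕜 := ℂ), h1]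
    nlinarith [norm_nonneg (A v), norm_nonneg (X v)]
  set Al : H →ₗ[ℂ] H := A.toLinearMap with hAl
  have hkerle : LinearMap.ker Al ≤ LinearMap.ker (X.toLinearMap) := by
    intro v hv
    rw [LinearMap.mem_ker] at hv ⊢
    have : ‖X v‖ = 0 := by rw [← hnorm]; simpa [hAl] using congrArg norm hv
    simpa using norm_eq_zero.mp this
  set M : Submodule ℂ H := LinearMap.range Al with hM
  set N : Submodule ℂ H := M.topologicalClosure with hN
  set f0 : M →ₗ[ℂ] H :=
    ((LinearMap.ker Al).liftQ X.toLinearMap hkerle).comp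
      (Al.quotKerEquivRange.symm.toLinearMap) with hf0def
  have hf0 : ∀ v : H, f0 ⟨Al v, LinearMap.mem_range_self Al v⟩ = X v := by
    intro v
    rw [hf0def, LinearMap.comp_apply, LinearEquiv.coe_toLinearMap]
    rw [LinearMap.quotKerEquivRange_symm_apply_image]
    rw [Submodule.mkQ_apply, Submodule.liftQ_apply]
    rfl
  have hf0norm : ∀ m : M, ‖f0 m‖ = ‖(m : H)‖ := by
    rintro ⟨-, v, rfl⟩
    rw [hf0 v]
    exact (hnorm v).symm
  set f1 : M →L[ℂ] H := f0.mkContinuous 1 (fun m => by rw [hf0norm, one_mul]; rfl) with hf1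
  have hf1app : ∀ m : M, f1 m = f0 m := fun m => rfl
  set e0 : M →ₗ[ℂ] N := Submodule.inclusion M.le_topologicalClosure with he0
  have he0app : ∀ m : M, ((e0 m : N) : H) = (m : H) := fun m => rfl
  set e : M →L[ℂ] N := e0.mkContinuous 1 (fun m => by
    have : ‖e0 m‖ = ‖(m : H)‖ := rfl
    rw [this, one_mul]; rfl) with he
  have heiso : Isometry e := by
    apply AddMonoidHomClass.isometry_of_norm
    intro m; rfl
  have hdense : DenseRange e := by
    intro n
    rw [closure_subtype]
    have himg : (Subtype.val '' Set.range e) = (M : Set H) := by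
      ext z
      constructor
      · rintro ⟨nn, ⟨m, rfl⟩, rfl⟩
        exact m.2
      · intro hz
        exact ⟨e ⟨z, hz⟩, ⟨⟨z, hz⟩, rfl⟩, rfl⟩
    rw [himg, ← Submodule.topologicalClosure_coe]
    exact n.2
  set F : N →L[ℂ] H := f1.extend e with hF
  have hFe : ∀ m : M, F (e m) = f1 m := fun m => ContinuousLinearMap.extend_eq f1 hdense heiso.isUniformInducing m
  have hFnorm : ∀ nn : N, ‖F nn‖ = ‖nn‖ := by
    have hcl : IsClosed {nn : N | ‖F nn‖ = ‖nn‖} :=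
      isClosed_eq F.continuous.norm continuous_subtype_val.norm
    intro nn
    refine hdense.induction_on nn hcl (fun m => ?_)
    show ‖F (e m)‖ = ‖e m‖
    rw [hFe, hf1app, hf0norm]
    rfl
  set Fiso : N →ₗᵢ[ℂ] H := ⟨F.toLinearMap, fun nn => hFnorm nn⟩ with hFiso
  have hFisoapp : ∀ nn : N, Fiso nn = F nn := fun nn => rfl
  set U : H →L[ℂ] H := F.comp N.orthogonalProjectionOnto with hU
  have hAvN : ∀ v, A v ∈ N := fun v => M.le_topologicalClosure (LinearMap.mem_range_self Al v)
  have hUA' : ∀ v, U (A v) = F ⟨A v, hAvN v⟩ := by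
    intro v
    rw [hU, ContinuousLinearMap.comp_apply]
    congr 1
    exact Submodule.orthogonalProjectionOnto_mem_subspace_eq_self (⟨A v, hAvN v⟩ : N)
  have hUA : ∀ v, U (A v) = X v := by
    intro v
    rw [hUA' v]
    have : (⟨A v, hAvN v⟩ : N) = e ⟨Al v, LinearMap.mem_range_self Al v⟩ := rfl
    rw [this, hFe, hf1app, hf0]
  have hXUA : X = U * A := by
    ext v
    rw [mul_apply_eq_comp, hUA]
  have hU1 : ‖U‖ ≤ 1 := by
    apply opNorm_le_bound _ zero_le_one
    intro w
    rw [one_mul, hU, ContinuousLinearMap.comp_apply, hFnorm]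
    calc ‖N.orthogonalProjectionOnto w‖ ≤ ‖N.orthogonalProjectionOnto‖ * ‖w‖ := le_opNorm _ _
      _ ≤ 1 * ‖w‖ := by
          have := Submodule.orthogonalProjectionOnto_norm_le N
          nlinarith [norm_nonneg w]
      _ = ‖w‖ := one_mul _
  refine ⟨adjoint U, ?_, ?_⟩
  · rw [show ‖adjoint U‖ = ‖U‖ from LinearIsometryEquiv.norm_map adjoint U]
    exact hU1
  · have hWUA : ∀ v, adjoint U (U (A v)) = A v := by
      intro v
      apply ext_inner_right ℂ
      intro w
      rw [adjoint_inner_left]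
      rw [hUA' v]
      have hUw : U w = F (N.orthogonalProjectionOnto w) := rfl
      rw [hUw, ← hFisoapp, ← hFisoapp, Fiso.inner_map_map]
      calc (inner ℂ ((⟨A v, hAvN v⟩ : N) : H) ((N.orthogonalProjectionOnto w : N) : H) : ℂ)
          = ⟪A v, (N.orthogonalProjectionOnto w : H)⟫_ℂ := rfl
        _ = ⟪A v, (N.orthogonalProjectionOnto w : H)⟫_ℂ
            + ⟪A v, w - N.orthogonalProjectionOnto w⟫_ℂ := by
              rw [Submodule.inner_right_of_mem_orthogonal (hAvN v)
                (show w - (N.orthogonalProjectionOnto w : H) ∈ Nᗮ from N.sub_starProjection_mem_orthogonal w), add_zero]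
        _ = ⟪A v, w⟫_ℂ := by rw [← inner_add_right]; congr 1; abel
    have hWU : adjoint U * (U * A) = A := by
      ext v
      rw [mul_apply_eq_comp, mul_apply_eq_comp]
      exact hWUA v
    calc adjoint X = adjoint (U * A) := by rw [← hXUA]
      _ = adjoint A * adjoint U := by
          rw [ContinuousLinearMap.mul_def, adjoint_comp, ContinuousLinearMap.mul_def]
      _ = A * adjoint U := by rw [hAadj]
      _ = (adjoint U * (U * A)) * adjoint U := by rw [hWU]
      _ = adjoint U * X * adjoint U := by rw [← hXUA, mul_assoc]

lemma SymmIdeal.adjoint_mem_and_le (S : SymmIdeal H) {X : H →L[ℂ] H} (hX : S.mem X) :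
    S.mem (adjoint X) ∧ S.snorm (adjoint X) ≤ S.snorm X := by
  obtain ⟨W, hW, hid⟩ := exists_conj_adjoint X
  constructor
  · rw [hid]
    exact S.mul_mem_right W (S.mul_mem_left W hX)
  · rw [hid]
    calc S.snorm (W * X * W) ≤ ‖W‖ * S.snorm X * ‖W‖ := S.snorm_symm W W X hX
      _ ≤ 1 * S.snorm X * 1 :=
          prod3_le hW le_rfl hW (S.snorm_nonneg X) (norm_nonneg W) zero_le_one (S.snorm_nonneg X)
      _ = S.snorm X := by ring

lemma sa_idem_apply_le {R : H →L[ℂ] H} (h1 : R * R = R) (h2 : IsSelfAdjoint R) (v : H) :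
    ‖R v‖ ≤ ‖v‖ := by
  have hadj : adjoint R = R := by rw [← star_eq_adjoint]; exact h2
  have hRR : R (R v) = R v := by rw [← mul_apply_eq_comp, h1]
  have h3 : ⟪adjoint R v, R v⟫_ℂ = ⟪v, R (R v)⟫_ℂ := adjoint_inner_left R (R v) v
  rw [hadj, hRR] at h3
  have key : ‖R v‖ * ‖R v‖ ≤ ‖v‖ * ‖R v‖ := by
    have h4 : ‖R v‖ * ‖R v‖ = RCLike.re ⟪R v, R v⟫_ℂ := (inner_self_eq_norm_mul_norm _).symm
    rw [h4, h3]
    calc RCLike.re ⟪v, R v⟫_ℂ ≤ ‖(⟪v, R v⟫_ℂ : ℂ)‖ := RCLike.re_le_norm _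
      _ ≤ ‖v‖ * ‖R v‖ := norm_inner_le_norm _ _
  nlinarith [norm_nonneg (R v), norm_nonneg v]

lemma sa_idem_opNorm_le {R : H →L[ℂ] H} (h1 : R * R = R) (h2 : IsSelfAdjoint R) : ‖R‖ ≤ 1 :=
  opNorm_le_bound _ zero_le_one fun v => by rw [one_mul]; exact sa_idem_apply_le h1 h2 v

lemma adjoint_isMP {A B : H →L[ℂ] H} (h : IsMP A B) : IsMP (adjoint A) (adjoint B) := by
  obtain ⟨h1, h2, h3, h4⟩ := h
  refine ⟨?_, ?_, ?_, ?_⟩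
  · simp only [← star_eq_adjoint]
    calc star A * star B * star A = star (A * B * A) := by simp [star_mul, mul_assoc]
      _ = star A := by rw [h1]
  · simp only [← star_eq_adjoint]
    calc star B * star A * star B = star (B * A * B) := by simp [star_mul, mul_assoc]
      _ = star B := by rw [h2]
  · simp only [← star_eq_adjoint]
    have hBA : star A * star B = B * A := by rw [← star_mul]; exact h4
    show star (star A * star B) = star A * star B
    rw [hBA]
    exact h4
  · simp only [← star_eq_adjoint]
    have hAB : star B * star A = A * B := by rw [← star_mul]; exact h3
    show star (star B * star A) = star B * star A
    rw [hAB]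
    exact h3

lemma mp_norm_bound {T G T' G' : H →L[ℂ] H} (hT : IsMP T G) (hT' : IsMP T' G')
    (hsmall : ‖G‖ * ‖T' - T‖ < 1)
    (hcond : ∀ z, (T * G * T') z = 0 → T' z = 0) (y : H) :
    (1 - ‖G‖ * ‖T' - T‖) * ‖G' y‖ ≤ ‖G‖ * ‖y‖ := by
  set s : H →L[ℂ] H := G * (T' - T) with hs
  have hsle : ‖s‖ ≤ ‖G‖ * ‖T' - T‖ := norm_mul_le _ _
  have hs1 : ‖s‖ < 1 := lt_of_le_of_lt hsle hsmall
  set C : H →L[ℂ] H := 1 + s with hC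
  have hu : ∃ u : (H →L[ℂ] H)ˣ, (u : H →L[ℂ] H) = C := by
    refine ⟨Units.oneSub (-s) (by rwa [norm_neg]), ?_⟩
    simp [hC, sub_neg_eq_add]
  obtain ⟨u, huC⟩ := hu
  have hTC : T * C = T * G * T' := by
    rw [hC, mul_add, mul_one, hs, ← mul_assoc, mul_sub]
    rw [hT.1]
    abel
  set x : H := G' y with hx
  set k : H := C x - G (T (C x)) with hk
  have hTk : T k = 0 := by
    rw [hk, map_sub]
    have h5 : T (G (T (C x))) = T (C x) := by
      rw [show T (G (T (C x))) = (T * G * T) (C x) from rfl, hT.1]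
    rw [h5, sub_self]
  set z : H := ((u⁻¹ : (H →L[ℂ] H)ˣ) : H →L[ℂ] H) k with hz
  have hCz : C z = k := by
    rw [hz, ← mul_apply_eq_comp, ← huC, u.mul_inv]
    rfl
  have hT'z : T' z = 0 := by
    apply hcond
    rw [← hTC, mul_apply_eq_comp, hCz]
    exact hTk
  have hxz : ⟪x, z⟫_ℂ = 0 := by
    have hQ'adj : adjoint (G' * T') = G' * T' := by
      rw [← star_eq_adjoint]; exact hT'.2.2.2
    have hxQ : (G' * T') x = x := by
      rw [hx, ← mul_apply_eq_comp, hT'.2.1]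
    calc ⟪x, z⟫_ℂ = ⟪(G' * T') x, z⟫_ℂ := by rw [hxQ]
      _ = ⟪x, (G' * T') z⟫_ℂ := by rw [← hQ'adj, adjoint_inner_left, hQ'adj]
      _ = 0 := by rw [mul_apply_eq_comp, hT'z, map_zero, inner_zero_right]
  have hxnorm : ‖x‖ ≤ ‖x - z‖ := by
    rcases eq_or_ne x 0 with h | h
    · simp [h]
    have h1 : RCLike.re ⟪x - z, x⟫_ℂ = ‖x‖ * ‖x‖ := by
      rw [inner_sub_left]
      have h6 : ⟪z, x⟫_ℂ = 0 := by
        rw [← inner_conj_symm, hxz, map_zero]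
      rw [h6, sub_zero, inner_self_eq_norm_mul_norm]
    have h2 : ‖x‖ * ‖x‖ ≤ ‖x - z‖ * ‖x‖ := by
      rw [← h1]
      calc RCLike.re ⟪x - z, x⟫_ℂ ≤ ‖(⟪x - z, x⟫_ℂ : ℂ)‖ := RCLike.re_le_norm _
        _ ≤ ‖x - z‖ * ‖x‖ := norm_inner_le_norm _ _
    have hxpos : 0 < ‖x‖ := norm_pos_iff.mpr h
    nlinarith
  have hGTC : G (T (C x)) = C (x - z) := by
    rw [map_sub, hCz, hk]
    abel
  have hlow : (1 - ‖s‖) * ‖x - z‖ ≤ ‖C (x - z)‖ := by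
    have h7 : C (x - z) = (x - z) + s (x - z) := by rw [hC]; simp [add_apply]
    rw [h7]
    have h1 : ‖s (x - z)‖ ≤ ‖s‖ * ‖x - z‖ := le_opNorm _ _
    have h2 : ‖x - z‖ ≤ ‖x - z + s (x - z)‖ + ‖s (x - z)‖ := by
      calc ‖x - z‖ = ‖(x - z + s (x - z)) - s (x - z)‖ := by congr 1; abel
        _ ≤ ‖x - z + s (x - z)‖ + ‖s (x - z)‖ := norm_sub_le _ _
    nlinarith
  have hup : ‖G (T (C x))‖ ≤ ‖G‖ * ‖y‖ := by
    have h1 : ‖G (T (C x))‖ ≤ ‖G‖ * ‖T (C x)‖ := le_opNorm _ _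
    have h2 : T (C x) = (T * G) (T' x) := by
      have h2' : (T * C) x = ((T * G) * T') x := by rw [hTC]
      rw [mul_apply_eq_comp, mul_apply_eq_comp] at h2'
      exact h2'
    have h3 : ‖(T * G) (T' x)‖ ≤ ‖T' x‖ := by
      apply sa_idem_apply_le _ hT.2.2.1
      calc (T * G) * (T * G) = (T * G * T) * G := by noncomm_ring
        _ = T * G := by rw [hT.1]
    have h4 : T' x = (T' * G') y := by rw [hx, mul_apply_eq_comp]
    have h5 : ‖(T' * G') y‖ ≤ ‖y‖ := by
      apply sa_idem_apply_le _ hT'.2.2.1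
      calc (T' * G') * (T' * G') = (T' * G' * T') * G' := by noncomm_ring
        _ = T' * G' := by rw [hT'.1]
    have h6 : ‖T (C x)‖ ≤ ‖y‖ := by
      rw [h2, h4] at *
      exact le_trans h3 h5
    nlinarith [norm_nonneg G]
  have hfinal : (1 - ‖s‖) * ‖x‖ ≤ ‖G‖ * ‖y‖ := by
    calc (1 - ‖s‖) * ‖x‖ ≤ (1 - ‖s‖) * ‖x - z‖ := by nlinarith
      _ ≤ ‖C (x - z)‖ := hlow
      _ = ‖G (T (C x))‖ := by rw [hGTC]
      _ ≤ ‖G‖ * ‖y‖ := hup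
  nlinarith [norm_nonneg x]

end AuxPolar

theorem mp_continuity_of_eventually_trivial_intersection (S : SymmIdeal H)
    (B : H →L[ℂ] H) (Bseq : ℕ → H →L[ℂ] H)
    (Bdag : H →L[ℂ] H) (Bseqdag : ℕ → H →L[ℂ] H)
    (hBcr : IsClosed (LinearMap.range (B : H →ₗ[ℂ] H) : Set H))
    (hBncr : ∀ n, IsClosed (LinearMap.range (Bseq n : H →ₗ[ℂ] H) : Set H))
    (hB : IsMP B Bdag) (hBn : ∀ n, IsMP (Bseq n) (Bseqdag n))
    (hmem : ∀ n, S.mem (Bseq n - B))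
    (hconv : Filter.Tendsto (fun n => S.snorm (Bseq n - B)) Filter.atTop (nhds 0))
    (hker : ∀ᶠ n in Filter.atTop,
      (LinearMap.ker (Bseq n : H →ₗ[ℂ] H))ᗮ ⊓ LinearMap.ker (B : H →ₗ[ℂ] H) = (⊥ : Submodule ℂ H)) :
    Filter.Tendsto (fun n => S.snorm (Bseqdag n - Bdag)) Filter.atTop (nhds 0) := by
  classical
  set g : ℝ := ‖Bdag‖ with hg
  have hg0 : 0 ≤ g := norm_nonneg _
  set K : ℝ := 7 * g * g with hK
  -- eventual smallness of the operator norm of the perturbation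
  have hsmall : ∀ᶠ n in Filter.atTop, g * ‖Bseq n - B‖ ≤ 1 / 2 := by
    have hc : ∀ᶠ n in Filter.atTop, S.snorm (Bseq n - B) < (1 / 2) / (g + 1) :=
      hconv.eventually (gt_mem_nhds (by positivity))
    filter_upwards [hc] with n hn
    have h1 : ‖Bseq n - B‖ ≤ S.snorm (Bseq n - B) := S.opNorm_le_snorm (hmem n)
    have h3 : g * ‖Bseq n - B‖ ≤ g * S.snorm (Bseq n - B) := mul_le_mul_of_nonneg_left h1 hg0
    have h4 : g * S.snorm (Bseq n - B) ≤ g * (1 / 2 / (g + 1)) :=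
      mul_le_mul_of_nonneg_left hn.le hg0
    have h5 : g * (1 / 2 / (g + 1)) ≤ (g + 1) * (1 / 2 / (g + 1)) := by
      apply mul_le_mul_of_nonneg_right (by linarith) (by positivity)
    have h6 : (g + 1) * (1 / 2 / (g + 1)) = 1 / 2 := by
      field_simp
    linarith
  have hbound : ∀ᶠ n in Filter.atTop,
      S.snorm (Bseqdag n - Bdag) ≤ K * S.snorm (Bseq n - B) := by
    filter_upwards [hker, hsmall] with n hk hsm
    set Bn : H →L[ℂ] H := Bseq n with hBndef
    set Gn : H →L[ℂ] H := Bseqdag n with hGndef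
    set En : H →L[ℂ] H := Bn - B with hEndef
    set κ : ℝ := S.snorm En with hκdef
    have hκ0 : 0 ≤ κ := S.snorm_nonneg _
    have hEop : ‖En‖ ≤ κ := S.opNorm_le_snorm (hmem n)
    have hMPa : IsMP (adjoint B) (adjoint Bdag) := adjoint_isMP hB
    have hMPa' : IsMP (adjoint Bn) (adjoint Gn) := adjoint_isMP (hBn n)
    have hadjsub : adjoint En = adjoint Bn - adjoint B := by
      rw [← star_eq_adjoint, ← star_eq_adjoint, ← star_eq_adjoint, hEndef, star_sub]
    have hnadjG : ‖adjoint Bdag‖ = g := LinearIsometryEquiv.norm_map adjoint Bdag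
    have hnadjE : ‖adjoint Bn - adjoint B‖ = ‖En‖ := by
      rw [← hadjsub]
      exact LinearIsometryEquiv.norm_map adjoint En
    have hsmall' : ‖adjoint Bdag‖ * ‖adjoint Bn - adjoint B‖ < 1 := by
      rw [hnadjG, hnadjE]; nlinarith
    -- the stability condition transferred to the adjoints
    have hcond : ∀ z, (adjoint B * adjoint Bdag * adjoint Bn) z = 0 → adjoint Bn z = 0 := by
      intro z hz
      set w : H := adjoint Bn z with hw
      have hw1 : w ∈ (LinearMap.ker (Bn : H →ₗ[ℂ] H))ᗮ := by
        rw [Submodule.mem_orthogonal]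
        intro u hu
        rw [hw, adjoint_inner_right, show Bn u = 0 from LinearMap.mem_ker.mp hu, inner_zero_left]
      have hQadj : adjoint B * adjoint Bdag = Bdag * B := by
        rw [← star_eq_adjoint, ← star_eq_adjoint, ← star_mul]
        exact hB.2.2.2
      have hw2 : w ∈ LinearMap.ker (B : H →ₗ[ℂ] H) := by
        rw [LinearMap.mem_ker]
        have hz' : (Bdag * B) w = 0 := by
          have e1 : (adjoint B * adjoint Bdag * adjoint Bn) z
              = (adjoint B * adjoint Bdag) w := by rw [mul_apply_eq_comp, hw]
          rw [e1, hQadj] at hz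
          exact hz
        have hBQ : B * (Bdag * B) = B := by rw [← mul_assoc, hB.1]
        calc B w = (B * (Bdag * B)) w := by rw [hBQ]
          _ = B ((Bdag * B) w) := by rw [mul_apply_eq_comp]
          _ = 0 := by rw [hz', map_zero]
      have hwmem : w ∈ (LinearMap.ker (Bn : H →ₗ[ℂ] H))ᗮ ⊓ LinearMap.ker (B : H →ₗ[ℂ] H) := ⟨hw1, hw2⟩
      rw [hk] at hwmem
      simpa using hwmem
    -- operator norm bound for Gn
    have hGnM : ‖Gn‖ ≤ 2 * g := by
      have hadjGnM : ‖adjoint Gn‖ ≤ 2 * g := by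
        apply opNorm_le_bound _ (by positivity)
        intro y
        have h2 := mp_norm_bound hMPa hMPa' hsmall' hcond y
        rw [hnadjG, hnadjE] at h2
        nlinarith [norm_nonneg (adjoint Gn y), norm_nonneg y]
      calc ‖Gn‖ = ‖adjoint Gn‖ := (LinearIsometryEquiv.norm_map adjoint Gn).symm
        _ ≤ 2 * g := hadjGnM
    -- relations used in the key identity
    have hQadj : adjoint B * adjoint Bdag = Bdag * B := by
      rw [← star_eq_adjoint, ← star_eq_adjoint, ← star_mul]
      exact hB.2.2.2
    have r1 : Gn * adjoint Gn * adjoint Bn = Gn := by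
      have h5 : adjoint Gn * adjoint Bn = Bn * Gn := by
        rw [← star_eq_adjoint, ← star_eq_adjoint, ← star_mul]
        exact (hBn n).2.2.1
      rw [mul_assoc, h5, ← mul_assoc, (hBn n).2.1]
    have r2 : adjoint B * (1 - B * Bdag) = 0 := by
      have hPsa : star (B * Bdag) = B * Bdag := hB.2.2.1
      have h6 : adjoint B * (B * Bdag) = adjoint B := by
        have h7 : star (B * Bdag * B) = star B * (B * Bdag) := by rw [star_mul, hPsa]
        rw [← star_eq_adjoint, ← h7, hB.1]
      rw [mul_sub, mul_one, h6, sub_self]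
    have r3 : (1 - Gn * Bn) * adjoint Bn = 0 := by
      have hQsa : star (Gn * Bn) = Gn * Bn := (hBn n).2.2.2
      have h8 : (Gn * Bn) * adjoint Bn = adjoint Bn := by
        have h9 : star (Bn * (Gn * Bn)) = (Gn * Bn) * star Bn := by rw [star_mul, hQsa]
        have h10 : Bn * (Gn * Bn) = Bn := by rw [← mul_assoc, (hBn n).1]
        rw [← star_eq_adjoint, ← h9, h10]
      rw [sub_mul, one_mul, h8, sub_self]
    have r4 : adjoint B * (adjoint Bdag * Bdag) = Bdag := by
      rw [← mul_assoc, hQadj, hB.2.1]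
    -- the key algebraic identity
    have t2eq : (Gn * adjoint Gn) * (adjoint En) * (1 - B * Bdag) = Gn * (1 - B * Bdag) := by
      rw [hadjsub, mul_sub (Gn * adjoint Gn), sub_mul, r1,
        mul_assoc (Gn * adjoint Gn) (adjoint B) (1 - B * Bdag), r2, mul_zero, sub_zero]
    have t3eq : ((1 - Gn * Bn) * (adjoint En)) * (adjoint Bdag * Bdag)
        = -((1 - Gn * Bn) * Bdag) := by
      rw [hadjsub, mul_sub (1 - Gn * Bn), sub_mul, r3, zero_mul,
        mul_assoc (1 - Gn * Bn) (adjoint B) (adjoint Bdag * Bdag), r4]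
      abel
    have hkey : Gn - Bdag = (-Gn) * En * Bdag
        + (Gn * adjoint Gn) * (adjoint En) * (1 - B * Bdag)
        + ((1 - Gn * Bn) * (adjoint En)) * (adjoint Bdag * Bdag) := by
      rw [t2eq, t3eq, hEndef]
      noncomm_ring
    -- snorm bounds for the three terms
    obtain ⟨hmemadjE, hsnadjE⟩ := S.adjoint_mem_and_le (hmem n)
    have hsnadjE' : S.snorm (adjoint En) ≤ κ := hsnadjE
    have hsnadjE0 : 0 ≤ S.snorm (adjoint En) := S.snorm_nonneg _
    have h1P : ‖(1 : H →L[ℂ] H) - B * Bdag‖ ≤ 1 := by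
      apply sa_idem_opNorm_le
      · have hPP : (B * Bdag) * (B * Bdag) = B * Bdag := by
          calc (B * Bdag) * (B * Bdag) = (B * Bdag * B) * Bdag := by noncomm_ring
            _ = B * Bdag := by rw [hB.1]
        calc (1 - B * Bdag) * (1 - B * Bdag)
            = 1 - B * Bdag - B * Bdag + (B * Bdag) * (B * Bdag) := by noncomm_ring
          _ = 1 - B * Bdag := by rw [hPP]; abel
      · exact (IsSelfAdjoint.one (H →L[ℂ] H)).sub hB.2.2.1
    have h1Q : ‖(1 : H →L[ℂ] H) - Gn * Bn‖ ≤ 1 := by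
      apply sa_idem_opNorm_le
      · have hQQ : (Gn * Bn) * (Gn * Bn) = Gn * Bn := by
          calc (Gn * Bn) * (Gn * Bn) = (Gn * Bn * Gn) * Bn := by noncomm_ring
            _ = Gn * Bn := by rw [(hBn n).2.1]
        calc (1 - Gn * Bn) * (1 - Gn * Bn)
            = 1 - Gn * Bn - Gn * Bn + (Gn * Bn) * (Gn * Bn) := by noncomm_ring
          _ = 1 - Gn * Bn := by rw [hQQ]; abel
      · exact (IsSelfAdjoint.one (H →L[ℂ] H)).sub (hBn n).2.2.2
    have b1 : S.snorm ((-Gn) * En * Bdag) ≤ 2 * g * κ * g := by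
      calc S.snorm ((-Gn) * En * Bdag) ≤ ‖-Gn‖ * S.snorm En * ‖Bdag‖ :=
            S.snorm_symm _ _ _ (hmem n)
        _ = ‖Gn‖ * κ * g := by rw [norm_neg]
        _ ≤ 2 * g * κ * g := prod3_le hGnM le_rfl le_rfl hκ0 hg0 (by positivity) hκ0
    have b2 : S.snorm ((Gn * adjoint Gn) * (adjoint En) * (1 - B * Bdag))
        ≤ (2 * g * (2 * g)) * κ * 1 := by
      calc S.snorm ((Gn * adjoint Gn) * (adjoint En) * (1 - B * Bdag))
          ≤ ‖Gn * adjoint Gn‖ * S.snorm (adjoint En) * ‖(1 : H →L[ℂ] H) - B * Bdag‖ :=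
            S.snorm_symm _ _ _ hmemadjE
        _ ≤ (2 * g * (2 * g)) * κ * 1 := by
            apply prod3_le _ hsnadjE' h1P hsnadjE0 (norm_nonneg _) (by positivity) hκ0
            calc ‖Gn * adjoint Gn‖ ≤ ‖Gn‖ * ‖adjoint Gn‖ := norm_mul_le _ _
              _ = ‖Gn‖ * ‖Gn‖ := by rw [LinearIsometryEquiv.norm_map adjoint Gn]
              _ ≤ 2 * g * (2 * g) := by nlinarith [norm_nonneg Gn]
    have b3 : S.snorm (((1 - Gn * Bn) * (adjoint En)) * (adjoint Bdag * Bdag))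
        ≤ 1 * κ * (g * g) := by
      calc S.snorm (((1 - Gn * Bn) * (adjoint En)) * (adjoint Bdag * Bdag))
          ≤ ‖(1 : H →L[ℂ] H) - Gn * Bn‖ * S.snorm (adjoint En) * ‖adjoint Bdag * Bdag‖ :=
            S.snorm_symm _ _ _ hmemadjE
        _ ≤ 1 * κ * (g * g) := by
            apply prod3_le h1Q hsnadjE' _ hsnadjE0 (norm_nonneg _) zero_le_one hκ0
            calc ‖adjoint Bdag * Bdag‖ ≤ ‖adjoint Bdag‖ * ‖Bdag‖ := norm_mul_le _ _
              _ = g * g := by rw [hnadjG]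
    have htri : S.snorm (Gn - Bdag) ≤ S.snorm ((-Gn) * En * Bdag)
        + S.snorm ((Gn * adjoint Gn) * (adjoint En) * (1 - B * Bdag))
        + S.snorm (((1 - Gn * Bn) * (adjoint En)) * (adjoint Bdag * Bdag)) := by
      rw [hkey]
      calc S.snorm ((-Gn) * En * Bdag
            + (Gn * adjoint Gn) * (adjoint En) * (1 - B * Bdag)
            + ((1 - Gn * Bn) * (adjoint En)) * (adjoint Bdag * Bdag))
          ≤ S.snorm ((-Gn) * En * Bdag
              + (Gn * adjoint Gn) * (adjoint En) * (1 - B * Bdag))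
            + S.snorm (((1 - Gn * Bn) * (adjoint En)) * (adjoint Bdag * Bdag)) :=
            S.snorm_triangle _ _
        _ ≤ _ := by
            have := S.snorm_triangle ((-Gn) * En * Bdag)
              ((Gn * adjoint Gn) * (adjoint En) * (1 - B * Bdag))
            linarith
    calc S.snorm (Bseqdag n - Bdag) = S.snorm (Gn - Bdag) := rfl
      _ ≤ _ := htri
      _ ≤ 2 * g * κ * g + (2 * g * (2 * g)) * κ * 1 + 1 * κ * (g * g) := by linarith
      _ = K * κ := by rw [hK]; ring
      _ = K * S.snorm (Bseq n - B) := rfl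
  have hlim : Filter.Tendsto (fun n => K * S.snorm (Bseq n - B)) Filter.atTop (nhds 0) := by
    simpa using hconv.const_mul K
  exact squeeze_zero' (Filter.Eventually.of_forall fun n => S.snorm_nonneg _) hbound hlim
end
end

section
/- Let S be a symmetrically-normed ideal, B a closed range operator, and (B_n) closed range operators with B_n − B ∈ S and ‖B_n − B‖_S → 0. If sup_n ‖B_n†‖ < ∞, then ‖B_n† − B†‖_S → 0. -/
open ContinuousLinearMap Filter MeasureTheory
open scoped InnerProductSpace

noncomputable section

variable {H : Type*} [NormedAddCommGroup H] [InnerProductSpace ℂ H] [CompleteSpace H]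

lemma exists_flip (K : H →L[ℂ] H) :
    ∃ V : H →L[ℂ] H, ‖V‖ ≤ 1 ∧ V * K * V = star K := by
  -- |K| = sqrt (K* K)
  set R : H →L[ℂ] H := CFC.sqrt (star K * K) with hRdef
  have hRnn : (0 : H →L[ℂ] H) ≤ R := CFC.sqrt_nonneg _
  have hRsa : IsSelfAdjoint R := IsSelfAdjoint.of_nonneg hRnn
  have hR2 : R * R = star K * K := CFC.sqrt_mul_sqrt_self _ (star_mul_self_nonneg K)
  have hnorm : ∀ x : H, ‖R x‖ = ‖K x‖ := by
    intro x
    have h1 : (⟪R x, R x⟫_ℂ) = ⟪K x, K x⟫_ℂ := by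
      have h2 : ⟪R x, R x⟫_ℂ = ⟪(star R * R) x, x⟫_ℂ := by
        rw [star_eq_adjoint, mul_apply_eq_comp, adjoint_inner_left]
      have h3 : ⟪K x, K x⟫_ℂ = ⟪(star K * K) x, x⟫_ℂ := by
        rw [star_eq_adjoint, mul_apply_eq_comp, adjoint_inner_left]
      rw [h2, h3, hRsa.star_eq, hR2]
    have h4 : ‖R x‖ ^ 2 = ‖K x‖ ^ 2 := by
      rw [← inner_self_eq_norm_sq (𝕜 := ℂ), ← inner_self_eq_norm_sq (𝕜 := ℂ)]
      exact_mod_cast congrArg Complex.re h1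
    nlinarith [norm_nonneg (R x), norm_nonneg (K x)]
  -- the range of R and its closure
  set Rl : H →ₗ[ℂ] H := (R : H →ₗ[ℂ] H) with hRl
  set Kl : H →ₗ[ℂ] H := (K : H →ₗ[ℂ] H) with hKl
  set E0 : Submodule ℂ H := LinearMap.range Rl with hE0
  set T : Submodule ℂ H := E0.topologicalClosure with hT
  have hTc : IsClosed (T : Set H) := E0.isClosed_topologicalClosure
  haveI : CompleteSpace T := hTc.completeSpace_coe
  -- inclusion of E0 into T as a linear isometry
  set jli : E0 →ₗᵢ[ℂ] T := ⟨E0.inclusion E0.le_topologicalClosure, fun x => rfl⟩ with hjli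
  set j : E0 →L[ℂ] T := jli.toContinuousLinearMap with hj
  have hjapp : ∀ v : E0, ((j v : T) : H) = (v : H) := fun v => rfl
  have hdense : DenseRange (⇑j) := by
    intro t
    have h1 : (t : H) ∈ closure (E0 : Set H) := by
      have h2 := t.2
      rw [← Submodule.topologicalClosure_coe]
      exact h2
    obtain ⟨u, hu1, hu2⟩ := mem_closure_iff_seq_limit.mp h1
    exact mem_closure_of_tendsto (f := fun n : ℕ => j ⟨u n, hu1 n⟩)
      (tendsto_subtype_rng.mpr hu2)
      (Filter.Eventually.of_forall fun n => Set.mem_range_self _)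
  have huni : IsUniformInducing (⇑j) := jli.isometry.isUniformInducing
  -- the map R x ↦ K x on E0, as a linear isometry into H
  have hker : LinearMap.ker Rl ≤ LinearMap.ker Kl := by
    intro x hx
    have : ‖Kl x‖ = 0 := by
      rw [LinearMap.mem_ker] at hx
      have := hnorm x
      simp only [hRl, ContinuousLinearMap.coe_coe] at hx
      show ‖K x‖ = 0
      rw [← this, hx, norm_zero]
    simpa [LinearMap.mem_ker] using norm_eq_zero.mp this
  set g : (H ⧸ LinearMap.ker Rl) →ₗ[ℂ] H := (LinearMap.ker Rl).liftQ Kl hker with hg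
  set e : (H ⧸ LinearMap.ker Rl) ≃ₗ[ℂ] E0 := Rl.quotKerEquivRange with he
  set f0 : E0 →ₗ[ℂ] H := g ∘ₗ (e.symm : E0 →ₗ[ℂ] (H ⧸ LinearMap.ker Rl)) with hf0
  have hf0app : ∀ x : H, f0 ⟨Rl x, LinearMap.mem_range_self Rl x⟩ = K x := by
    intro x
    have h1 : e (Submodule.Quotient.mk x) = ⟨Rl x, LinearMap.mem_range_self Rl x⟩ := by
      apply Subtype.ext
      exact Rl.quotKerEquivRange_apply_mk x
    have h2 : e.symm ⟨Rl x, LinearMap.mem_range_self Rl x⟩ = Submodule.Quotient.mk x := by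
      rw [← h1, LinearEquiv.symm_apply_apply]
    simp only [hf0, LinearMap.comp_apply, LinearEquiv.coe_coe, h2]
    simp [hg, Submodule.liftQ_apply, hKl]
  have hf0norm : ∀ v : E0, ‖f0 v‖ = ‖v‖ := by
    rintro ⟨w, hw⟩
    obtain ⟨x, hx⟩ := hw
    have hval : (⟨w, Exists.intro x hx⟩ : E0) = ⟨Rl x, LinearMap.mem_range_self Rl x⟩ := by
      apply Subtype.ext; exact hx.symm
    rw [hval, hf0app x]
    simp only [Submodule.coe_norm]
    rw [← hnorm x]
    rfl
  set fli : E0 →ₗᵢ[ℂ] H := ⟨f0, hf0norm⟩ with hfli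
  set f : E0 →L[ℂ] H := fli.toContinuousLinearMap with hf
  -- extend to T, compose with orthogonal projection
  set U1 : T →L[ℂ] H := f.extend j with hU1
  have hU1e : ∀ v : E0, U1 (j v) = f v := fun v =>
    ContinuousLinearMap.extend_eq f hdense huni v
  have hU1iso : ∀ t : T, ‖U1 t‖ = ‖t‖ := by
    intro t
    refine hdense.induction_on t ?_ ?_
    · exact isClosed_eq (continuous_norm.comp U1.continuous) continuous_norm
    · intro v
      rw [hU1e v]
      have := fli.norm_map v
      rw [hf]
      rw [LinearIsometry.coe_toContinuousLinearMap]
      rw [this]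
      exact (jli.norm_map v).symm
  set Uli : T →ₗᵢ[ℂ] H := ⟨(U1 : T →ₗ[ℂ] H), hU1iso⟩ with hUli
  set P := Submodule.orthogonalProjectionOnto T with hP
  set U : H →L[ℂ] H := U1 ∘L (P : H →L[ℂ] T) with hU
  have hmemE0 : ∀ x : H, R x ∈ E0 := fun x => LinearMap.mem_range_self Rl x
  have hmemT : ∀ x : H, R x ∈ T := fun x => E0.le_topologicalClosure (hmemE0 x)
  have hPR : ∀ x : H, P (R x) = ⟨R x, hmemT x⟩ := by
    intro x
    have := Submodule.orthogonalProjectionOnto_mem_subspace_eq_self (K := T) ⟨R x, hmemT x⟩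
    exact this
  have hUK : ∀ x : H, U (R x) = K x := by
    intro x
    have h1 : U (R x) = U1 (P (R x)) := rfl
    rw [h1, hPR x]
    have h2 : (⟨R x, hmemT x⟩ : T) = j ⟨R x, hmemE0 x⟩ := by
      apply Subtype.ext; rfl
    rw [h2, hU1e]
    have h3 : f ⟨R x, hmemE0 x⟩ = f0 ⟨R x, hmemE0 x⟩ := rfl
    rw [h3]
    exact hf0app x
  have hUeq : ∀ t : T, U1 t = Uli t := fun t => rfl
  have hinner : ∀ x y : H, ⟪U x, U y⟫_ℂ = ⟪((P x : T) : H), y⟫_ℂ := by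
    intro x y
    have h1 : ⟪U x, U y⟫_ℂ = ⟪Uli (P x), Uli (P y)⟫_ℂ := rfl
    rw [h1, Uli.inner_map_map]
    have h2 : ⟪(P x : T), (P y : T)⟫_ℂ = ⟪((P x : T) : H), ((P y : T) : H)⟫_ℂ := rfl
    rw [h2]
    have h3 : ⟪((P ((P x : T) : H) : T) : H), y⟫_ℂ = ⟪((P x : T) : H), ((P y : T) : H)⟫_ℂ :=
      Submodule.inner_starProjection_left_eq_right T ((P x : T) : H) y
    have h4 : P ((P x : T) : H) = P x := Submodule.orthogonalProjectionOnto_mem_subspace_eq_self (P x)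
    rw [h4] at h3
    exact h3.symm
  have hsUUR : ∀ x : H, (star U * U) (R x) = R x := by
    intro x
    apply ext_inner_right ℂ
    intro y
    have h1 : (star U * U) (R x) = adjoint U (U (R x)) := by
      rw [star_eq_adjoint]; rfl
    rw [h1, adjoint_inner_left, hinner, hPR x]
  have hURop : U * R = K := by ext x; exact hUK x
  have hsUURop : star U * U * R = R := by ext x; exact hsUUR x
  refine ⟨star U, ?_, ?_⟩
  · rw [norm_star]
    apply opNorm_le_bound _ zero_le_one
    intro x
    have h1 : U x = U1 (P x) := rfl
    rw [h1, hU1iso, one_mul]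
    calc ‖(P x : T)‖ ≤ ‖(P : H →L[ℂ] T)‖ * ‖x‖ := le_opNorm _ _
    _ ≤ 1 * ‖x‖ := by
        apply mul_le_mul_of_nonneg_right (Submodule.orthogonalProjectionOnto_norm_le T) (norm_nonneg _)
    _ = ‖x‖ := one_mul _
  · calc star U * K * star U = star U * (U * R) * star U := by rw [hURop]
    _ = (star U * U * R) * star U := by rw [← mul_assoc]
    _ = R * star U := by rw [hsUURop]
    _ = star K := by rw [← hURop, star_mul, hRsa.star_eq]

lemma wedin {R : Type*} [Ring R] [StarRing R] (X A x a : R)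
    (h1 : X*x*X = X) (h2 : x*X*x = x) (h3 : star (X*x) = X*x) (h4 : star (x*X) = x*X)
    (h5 : A*a*A = A) (h6 : a*A*a = a) (h7 : star (A*a) = A*a) (h8 : star (a*A) = a*A) :
    x - a = (-x)*(X-A)*a + (x*star x)*(star (X-A))*(1 - A*a)
      + (1 - x*X)*(star (X-A))*(star a * a) := by
  have e1 : star A * (A * a) = star A := by rw [← h7, ← star_mul, h5]
  have e2 : x * star x * star X = x := by
    rw [mul_assoc, ← star_mul, h3, ← mul_assoc, h2]
  have e3 : x * X * star X = star X := by
    rw [← h4, ← star_mul, ← mul_assoc, h1]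
  have e4 : star A * (star a * a) = a := by rw [← mul_assoc, ← star_mul, h8, h6]
  have t2 : (x*star x)*(star (X-A))*(1 - A*a) = x - x*(A*a) := by
    have e1' : x * star x * star A * (A * a) = x * star x * star A := by
      rw [mul_assoc (x * star x), e1]
    simp only [star_sub, mul_sub, sub_mul, mul_one, one_mul]
    rw [e2, e1']
    abel
  have t3 : (1 - x*X)*(star (X-A))*(star a * a) = -a + x*X*a := by
    have e4' : x * X * star A * (star a * a) = x * X * a := by
      rw [mul_assoc (x*X), e4]
    simp only [star_sub, mul_sub, sub_mul, mul_one, one_mul]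
    rw [e3, e4, e4']
    abel
  rw [t2, t3]
  noncomm_ring


set_option maxHeartbeats 1000000 in
theorem mp_continuity_of_bounded_daggers (S : SymmIdeal H)
    (B : H →L[ℂ] H) (Bseq : ℕ → H →L[ℂ] H)
    (Bdag : H →L[ℂ] H) (Bseqdag : ℕ → H →L[ℂ] H)
    (hBcr : IsClosed (LinearMap.range (B : H →ₗ[ℂ] H) : Set H))
    (hBncr : ∀ n, IsClosed (LinearMap.range (Bseq n : H →ₗ[ℂ] H) : Set H))
    (hB : IsMP B Bdag) (hBn : ∀ n, IsMP (Bseq n) (Bseqdag n))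
    (hmem : ∀ n, S.mem (Bseq n - B))
    (hconv : Filter.Tendsto (fun n => S.snorm (Bseq n - B)) Filter.atTop (nhds 0))
    (hbdd : ∃ M : ℝ, ∀ n, ‖Bseqdag n‖ ≤ M) :
    Filter.Tendsto (fun n => S.snorm (Bseqdag n - Bdag)) Filter.atTop (nhds 0) := by
  obtain ⟨M, hM⟩ := hbdd
  have hM0 : 0 ≤ M := le_trans (norm_nonneg _) (hM 0)
  obtain ⟨hB1, hB2, hB3, hB4⟩ := hB
  have hone : ‖(1 : H →L[ℂ] H)‖ ≤ 1 := by
    rw [ContinuousLinearMap.one_def]; exact ContinuousLinearMap.norm_id_le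
  have key : ∀ n, S.snorm (Bseqdag n - Bdag) ≤
      M * S.snorm (Bseq n - B) * ‖Bdag‖
      + (M*M) * S.snorm (Bseq n - B) * (1 + ‖B‖*‖Bdag‖)
      + (1 + M*(‖B‖ + S.snorm (Bseq n - B))) * S.snorm (Bseq n - B) * (‖Bdag‖*‖Bdag‖) := by
    intro n
    obtain ⟨hn1, hn2, hn3, hn4⟩ := hBn n
    obtain ⟨V, hV1, hV2⟩ := exists_flip (Bseq n - B)
    set K : H →L[ℂ] H := Bseq n - B with hK
    set s : ℝ := S.snorm K with hs
    have hs0 : 0 ≤ s := S.snorm_nonneg K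
    have hdecomp : Bseqdag n - Bdag =
        (-(Bseqdag n)) * K * Bdag
        + ((Bseqdag n * star (Bseqdag n)) * V) * K * (V * (1 - B * Bdag))
        + ((1 - Bseqdag n * Bseq n) * V) * K * (V * (star Bdag * Bdag)) := by
      have hw := wedin (Bseq n) B (Bseqdag n) Bdag hn1 hn2 hn3 hn4 hB1 hB2 hB3 hB4
      rw [hw, ← hK, ← hV2]
      noncomm_ring
    have b1 : S.snorm ((-(Bseqdag n)) * K * Bdag) ≤ M * s * ‖Bdag‖ := by
      refine le_trans (S.snorm_symm _ _ _ (hmem n)) ?_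
      have h : ‖-(Bseqdag n)‖ ≤ M := by rw [norm_neg]; exact hM n
      exact mul_le_mul_of_nonneg_right (mul_le_mul_of_nonneg_right h hs0) (norm_nonneg _)
    have b2 : S.snorm (((Bseqdag n * star (Bseqdag n)) * V) * K * (V * (1 - B * Bdag)))
        ≤ (M*M) * s * (1 + ‖B‖*‖Bdag‖) := by
      refine le_trans (S.snorm_symm _ _ _ (hmem n)) ?_
      have hA : ‖(Bseqdag n * star (Bseqdag n)) * V‖ ≤ M*M := by
        calc ‖(Bseqdag n * star (Bseqdag n)) * V‖
            ≤ ‖Bseqdag n * star (Bseqdag n)‖ * ‖V‖ := norm_mul_le _ _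
          _ ≤ (‖Bseqdag n‖ * ‖star (Bseqdag n)‖) * 1 :=
              mul_le_mul (norm_mul_le _ _) hV1 (norm_nonneg _) (by positivity)
          _ = ‖Bseqdag n‖ * ‖Bseqdag n‖ := by rw [norm_star, mul_one]
          _ ≤ M*M := mul_le_mul (hM n) (hM n) (norm_nonneg _) hM0
      have hC : ‖V * (1 - B * Bdag)‖ ≤ 1 + ‖B‖*‖Bdag‖ := by
        calc ‖V * (1 - B * Bdag)‖ ≤ ‖V‖ * ‖1 - B * Bdag‖ := norm_mul_le _ _
          _ ≤ 1 * (1 + ‖B‖*‖Bdag‖) := by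
              refine mul_le_mul hV1 ?_ (norm_nonneg _) zero_le_one
              calc ‖(1 : H →L[ℂ] H) - B * Bdag‖ ≤ ‖(1 : H →L[ℂ] H)‖ + ‖B * Bdag‖ :=
                    norm_sub_le _ _
                _ ≤ 1 + ‖B‖*‖Bdag‖ := add_le_add hone (norm_mul_le _ _)
          _ = 1 + ‖B‖*‖Bdag‖ := one_mul _
      calc ‖(Bseqdag n * star (Bseqdag n)) * V‖ * s * ‖V * (1 - B * Bdag)‖
          ≤ (M*M) * s * ‖V * (1 - B * Bdag)‖ :=
            mul_le_mul_of_nonneg_right (mul_le_mul_of_nonneg_right hA hs0) (norm_nonneg _)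
        _ ≤ (M*M) * s * (1 + ‖B‖*‖Bdag‖) := by
            refine mul_le_mul_of_nonneg_left hC (by positivity)
    have b3 : S.snorm (((1 - Bseqdag n * Bseq n) * V) * K * (V * (star Bdag * Bdag)))
        ≤ (1 + M*(‖B‖ + s)) * s * (‖Bdag‖*‖Bdag‖) := by
      refine le_trans (S.snorm_symm _ _ _ (hmem n)) ?_
      have hKop : ‖K‖ ≤ s := S.opNorm_le_snorm (hmem n)
      have hXn : ‖Bseq n‖ ≤ ‖B‖ + s := by
        have h1 : Bseq n = B + K := by rw [hK]; abel
        calc ‖Bseq n‖ = ‖B + K‖ := by rw [← h1]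
          _ ≤ ‖B‖ + ‖K‖ := norm_add_le _ _
          _ ≤ ‖B‖ + s := add_le_add_right hKop _
      have hA : ‖(1 - Bseqdag n * Bseq n) * V‖ ≤ 1 + M*(‖B‖ + s) := by
        calc ‖(1 - Bseqdag n * Bseq n) * V‖ ≤ ‖1 - Bseqdag n * Bseq n‖ * ‖V‖ :=
              norm_mul_le _ _
          _ ≤ (1 + M*(‖B‖ + s)) * 1 := by
              refine mul_le_mul ?_ hV1 (norm_nonneg _) (by positivity)
              calc ‖(1 : H →L[ℂ] H) - Bseqdag n * Bseq n‖
                  ≤ ‖(1 : H →L[ℂ] H)‖ + ‖Bseqdag n * Bseq n‖ := norm_sub_le _ _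
                _ ≤ 1 + M*(‖B‖ + s) := by
                    refine add_le_add hone ?_
                    calc ‖Bseqdag n * Bseq n‖ ≤ ‖Bseqdag n‖ * ‖Bseq n‖ := norm_mul_le _ _
                      _ ≤ M * (‖B‖ + s) :=
                          mul_le_mul (hM n) hXn (norm_nonneg _) hM0
          _ = 1 + M*(‖B‖ + s) := mul_one _
      have hC : ‖V * (star Bdag * Bdag)‖ ≤ ‖Bdag‖*‖Bdag‖ := by
        calc ‖V * (star Bdag * Bdag)‖ ≤ ‖V‖ * ‖star Bdag * Bdag‖ := norm_mul_le _ _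
          _ ≤ 1 * (‖Bdag‖*‖Bdag‖) := by
              refine mul_le_mul hV1 ?_ (norm_nonneg _) zero_le_one
              calc ‖star Bdag * Bdag‖ ≤ ‖star Bdag‖ * ‖Bdag‖ := norm_mul_le _ _
                _ = ‖Bdag‖*‖Bdag‖ := by rw [norm_star]
          _ = ‖Bdag‖*‖Bdag‖ := one_mul _
      calc ‖(1 - Bseqdag n * Bseq n) * V‖ * s * ‖V * (star Bdag * Bdag)‖
          ≤ (1 + M*(‖B‖ + s)) * s * ‖V * (star Bdag * Bdag)‖ :=
            mul_le_mul_of_nonneg_right (mul_le_mul_of_nonneg_right hA hs0) (norm_nonneg _)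
        _ ≤ (1 + M*(‖B‖ + s)) * s * (‖Bdag‖*‖Bdag‖) := by
            refine mul_le_mul_of_nonneg_left hC ?_
            have : (0:ℝ) ≤ 1 + M*(‖B‖ + s) := by positivity
            positivity
    rw [hdecomp]
    calc S.snorm (_ + _ + _)
        ≤ S.snorm (_ + _) + S.snorm _ := S.snorm_triangle _ _
      _ ≤ S.snorm _ + S.snorm _ + S.snorm _ := add_le_add_left (S.snorm_triangle _ _) _
      _ ≤ _ := add_le_add (add_le_add b1 b2) b3
  have hg : Filter.Tendsto (fun n =>
      M * S.snorm (Bseq n - B) * ‖Bdag‖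
      + (M*M) * S.snorm (Bseq n - B) * (1 + ‖B‖*‖Bdag‖)
      + (1 + M*(‖B‖ + S.snorm (Bseq n - B))) * S.snorm (Bseq n - B) * (‖Bdag‖*‖Bdag‖))
      Filter.atTop (nhds 0) := by
    have h0 : (0:ℝ) = M * 0 * ‖Bdag‖ + (M*M) * 0 * (1 + ‖B‖*‖Bdag‖)
        + (1 + M*(‖B‖ + 0)) * 0 * (‖Bdag‖*‖Bdag‖) := by ring
    rw [h0]
    refine Filter.Tendsto.add (Filter.Tendsto.add ?_ ?_) ?_
    · exact (hconv.const_mul M).mul_const _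
    · exact (hconv.const_mul (M*M)).mul_const _
    · exact (((tendsto_const_nhds.add
        ((tendsto_const_nhds.add hconv).const_mul M))).mul hconv).mul_const _
  exact squeeze_zero (fun n => S.snorm_nonneg _) key hg
end
end

section
/- Let S be a symmetrically-normed ideal, B a closed range operator, and (B_n) a sequence of closed range operators with B_n − B ∈ S and ‖B_n − B‖_S → 0. If ‖B_n† − B†‖_S → 0, then ‖P_{ker B_n} − P_{ker B}‖_S < 1 for all sufficiently large n. -/
set_option synthInstance.maxHeartbeats 1000000
set_option maxHeartbeats 1000000

open ContinuousLinearMap Filter MeasureTheory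
open scoped InnerProductSpace

noncomputable section

variable {H : Type*} [NormedAddCommGroup H] [InnerProductSpace ℂ H] [CompleteSpace H]

private lemma fixes_of_isOrthoProjOnto {P : H →L[ℂ] H} {M : Submodule ℂ H}
    (h : IsOrthoProjOnto P M) {m : H} (hm : m ∈ M) : P m = m := by
  rw [← h.2.2] at hm
  obtain ⟨z, rfl⟩ := hm
  have := congrArg (fun (Q : H →L[ℂ] H) => Q z) h.2.1
  simpa using this

private lemma kills_of_isOrthoProjOnto {P : H →L[ℂ] H} {M : Submodule ℂ H}
    (h : IsOrthoProjOnto P M) {u : H} (hu : ∀ m ∈ M, ⟪u, m⟫_ℂ = 0) : P u = 0 := by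
  have h1 := ContinuousLinearMap.adjoint_inner_left P (P u) u
  rw [h.1.adjoint_eq] at h1
  have h2 : P (P u) ∈ M := by rw [← h.2.2]; exact ⟨P u, rfl⟩
  rw [hu _ h2] at h1
  rwa [inner_self_eq_zero] at h1

private lemma isOrthoProjOnto_unique {P₁ P₂ : H →L[ℂ] H} {M : Submodule ℂ H}
    (h₁ : IsOrthoProjOnto P₁ M) (h₂ : IsOrthoProjOnto P₂ M) : P₁ = P₂ := by
  ext x
  have hmem : P₂ x ∈ M := by rw [← h₂.2.2]; exact ⟨x, rfl⟩
  have horth : ∀ m ∈ M, ⟪x - P₂ x, m⟫_ℂ = 0 := by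
    intro m hm
    rw [inner_sub_left]
    have : ⟪P₂ x, m⟫_ℂ = ⟪x, P₂ m⟫_ℂ := by
      have h' := ContinuousLinearMap.adjoint_inner_left P₂ m x
      rwa [h₂.1.adjoint_eq] at h'
    rw [this, fixes_of_isOrthoProjOnto h₂ hm, sub_self]
  have e1 : P₁ x = P₁ (P₂ x) + P₁ (x - P₂ x) := by rw [← map_add]; congr 1; abel
  rw [e1, fixes_of_isOrthoProjOnto h₁ hmem, kills_of_isOrthoProjOnto h₁ horth, add_zero]

private lemma mp_ker_proj {B Bd : H →L[ℂ] H} (hB : IsMP B Bd) :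
    IsOrthoProjOnto (1 - Bd * B) (LinearMap.ker (B : H →ₗ[ℂ] H)) := by
  refine ⟨(IsSelfAdjoint.one (R := H →L[ℂ] H)).sub hB.2.2.2, ?_, ?_⟩
  · have h3 : Bd * (B * (Bd * B)) = Bd * B := by
      have := congrArg (· * B) hB.2.1
      simpa [mul_assoc] using this
    noncomm_ring
    rw [h3]
    abel
  · apply le_antisymm
    · rintro x ⟨y, rfl⟩
      have h0 : B - B * Bd * B = 0 := by rw [hB.1]; simp
      have h1 : B ((1 - Bd * B) y) = (B - B * Bd * B) y := by
        simp [ContinuousLinearMap.sub_apply, ContinuousLinearMap.mul_apply]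
      have hz : B ((1 - Bd * B) y) = 0 := by rw [h1, h0]; rfl
      exact hz
    · intro x hx
      have hx' : B x = 0 := hx
      refine ⟨x, ?_⟩
      show (1 - Bd * B) x = x
      simp [ContinuousLinearMap.sub_apply, ContinuousLinearMap.mul_apply, hx']

private lemma star_absorb_right {B Bd : H →L[ℂ] H} (hB : IsMP B Bd) :
    star B * (B * Bd) = star B := by
  have h1 : star (B * Bd * B) = star B * (B * Bd) := by rw [star_mul, hB.2.2.1.star_eq]
  rw [hB.1] at h1
  exact h1.symm

private lemma star_absorb_left {B Bd : H →L[ℂ] H} (hB : IsMP B Bd) :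
    (Bd * B) * star B = star B := by
  have h1 : star (B * (Bd * B)) = star (Bd * B) * star B := star_mul _ _
  rw [hB.2.2.2.star_eq, ← mul_assoc, hB.1] at h1
  exact h1.symm

private lemma wedin_s8 {B Bd Bn Bnd : H →L[ℂ] H} (hB : IsMP B Bd) (hBn : IsMP Bn Bnd) :
    Bnd - Bd = -(Bnd * (Bn - B) * Bd)
      + (Bnd * star Bnd) * star (Bn - B) * (1 - B * Bd)
      + (1 - Bnd * Bn) * star (Bn - B) * (star Bd * Bd) := by
  have hBnBnd : star Bnd * star Bn = Bn * Bnd := by rw [← star_mul, hBn.2.2.1.star_eq]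
  have hBdB : star B * star Bd = Bd * B := by rw [← star_mul, hB.2.2.2.star_eq]
  have f1 : Bnd * star Bnd * star Bn = Bnd := by rw [mul_assoc, hBnBnd, ← mul_assoc, hBn.2.1]
  have f2 : star B * (1 - B * Bd) = 0 := by
    rw [mul_sub, mul_one, star_absorb_right hB, sub_self]
  have f3 : (1 - Bnd * Bn) * star Bn = 0 := by
    rw [sub_mul, one_mul, star_absorb_left hBn, sub_self]
  have f4 : star B * (star Bd * Bd) = Bd := by rw [← mul_assoc, hBdB, hB.2.1]
  rw [star_sub]
  rw [show (Bnd * star Bnd) * (star Bn - star B) * (1 - B * Bd)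
      = Bnd * star Bnd * star Bn * (1 - B * Bd) - (Bnd * star Bnd) * (star B * (1 - B * Bd))
      from by noncomm_ring]
  rw [f1, f2, mul_zero, sub_zero]
  rw [show (1 - Bnd * Bn) * (star Bn - star B) * (star Bd * Bd)
      = (1 - Bnd * Bn) * star Bn * (star Bd * Bd) - (1 - Bnd * Bn) * (star B * (star Bd * Bd))
      from by noncomm_ring]
  rw [f3, f4, zero_mul]
  noncomm_ring

private lemma exists_star_factor (T : H →L[ℂ] H) :
    ∃ U : H →L[ℂ] H, star T = U * T * U := by
  classical
  set A : H →L[ℂ] H := CFC.sqrt (star T * T) with hAdef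
  have hA : IsSelfAdjoint A := (CFC.sqrt_nonneg (a := star T * T)).isSelfAdjoint
  have hAA : A * A = star T * T := CFC.sqrt_mul_sqrt_self _ (star_mul_self_nonneg T)
  have happ : ∀ x : H, A (A x) = adjoint T (T x) := by
    intro x
    have := congrArg (fun (Q : H →L[ℂ] H) => Q x) hAA
    simpa [ContinuousLinearMap.mul_apply, ContinuousLinearMap.star_eq_adjoint] using this
  have hinnAA : ∀ x z : H, ⟪A x, A z⟫_ℂ = ⟪T x, T z⟫_ℂ := by
    intro x z
    have ha := ContinuousLinearMap.adjoint_inner_right A x (A z)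
    rw [hA.adjoint_eq] at ha
    have ht := ContinuousLinearMap.adjoint_inner_right T x (T z)
    rw [← ha, happ, ht]
  have hnorm : ∀ x : H, ‖A x‖ = ‖T x‖ := by
    intro x
    have h2 := congrArg (RCLike.re (K := ℂ)) (hinnAA x x)
    rw [inner_self_eq_norm_sq (𝕜 := ℂ), inner_self_eq_norm_sq (𝕜 := ℂ)] at h2
    have h3 := congrArg Real.sqrt h2
    rwa [Real.sqrt_sq (norm_nonneg _), Real.sqrt_sq (norm_nonneg _)] at h3
  set f : H →ₗ[ℂ] H := (A : H →ₗ[ℂ] H) with hfdef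
  have hle : LinearMap.ker f ≤ LinearMap.ker (T : H →ₗ[ℂ] H) := by
    intro x hx
    have hx' : A x = 0 := hx
    have : T x = 0 := by
      have := hnorm x
      rw [hx', norm_zero] at this
      exact norm_eq_zero.mp this.symm
    exact this
  set R : Submodule ℂ H := LinearMap.range f with hRdef
  set g₀ : R →ₗ[ℂ] H :=
    ((LinearMap.ker f).liftQ (T : H →ₗ[ℂ] H) hle).comp
      (f.quotKerEquivRange.symm : R →ₗ[ℂ] (H ⧸ LinearMap.ker f)) with hg₀def
  have hg₀ : ∀ (x : H) (hx : f x ∈ R), g₀ ⟨f x, hx⟩ = T x := by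
    intro x hx
    have h2 : f.quotKerEquivRange.symm ⟨f x, hx⟩ = (LinearMap.ker f).mkQ x :=
      f.quotKerEquivRange_symm_apply_image x hx
    show ((LinearMap.ker f).liftQ (T : H →ₗ[ℂ] H) hle) (f.quotKerEquivRange.symm ⟨f x, hx⟩) = T x
    rw [h2]
    exact Submodule.liftQ_apply _ _ _
  have hg₀norm : ∀ y : R, ‖g₀ y‖ = ‖(y : H)‖ := by
    rintro ⟨w, hw⟩
    obtain ⟨x, hx⟩ := hw
    subst hx
    rw [hg₀ x ⟨x, rfl⟩]
    exact ((hnorm x).symm : ‖T x‖ = ‖A x‖)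
  set g : R →L[ℂ] H := g₀.mkContinuous 1 (fun y => by rw [hg₀norm y, one_mul]; rfl) with hgdef
  set M : Submodule ℂ H := R.topologicalClosure with hMdef
  set e : R →L[ℂ] M := R.subtypeL.codRestrict M (fun y => R.le_topologicalClosure y.2) with hedef
  have he_iso : Isometry e := AddMonoidHomClass.isometry_of_norm e (fun y => rfl)
  have he : IsUniformInducing e := he_iso.isUniformInducing
  have hval : Subtype.val '' Set.range e = (R : Set H) := by
    ext z
    constructor
    · rintro ⟨w, ⟨v, rfl⟩, rfl⟩
      exact v.2
    · intro hz
      exact ⟨e ⟨z, hz⟩, ⟨⟨z, hz⟩, rfl⟩, rfl⟩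
  have hd : DenseRange e := by
    intro y
    rw [closure_subtype, hval]
    have hy := y.2
    rw [← Submodule.topologicalClosure_coe]
    exact hy
  set Ubar : M →L[ℂ] H := g.extend e with hUbardef
  set U : H →L[ℂ] H := Ubar.comp (M.orthogonalProjectionOnto) with hUdef
  have hUA : ∀ x : H, U (A x) = T x := by
    intro x
    have hmR : A x ∈ R := ⟨x, rfl⟩
    have hmM : A x ∈ M := R.le_topologicalClosure hmR
    have h1 : M.orthogonalProjectionOnto (A x) = ⟨A x, hmM⟩ :=
      Submodule.orthogonalProjectionOnto_mem_subspace_eq_self (⟨A x, hmM⟩ : M)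
    have h2 : (⟨A x, hmM⟩ : M) = e ⟨A x, hmR⟩ := rfl
    show Ubar (M.orthogonalProjectionOnto (A x)) = T x
    rw [h1, h2, ContinuousLinearMap.extend_eq _ hd he]
    exact hg₀ x hmR
  have hinner : ∀ (x : H) (m : M), ⟪T x, Ubar m⟫_ℂ = ⟪A x, (m : H)⟫_ℂ := by
    intro x m
    refine hd.induction_on m ?_ ?_
    · apply isClosed_eq
      · exact Continuous.inner continuous_const (Ubar.continuous)
      · exact Continuous.inner continuous_const continuous_subtype_val
    · rintro ⟨w, hw⟩
      obtain ⟨z, hz⟩ := hw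
      subst hz
      have h1 : Ubar (e ⟨f z, ⟨z, rfl⟩⟩) = T z := by
        rw [ContinuousLinearMap.extend_eq _ hd he]
        exact hg₀ z ⟨z, rfl⟩
      have h2 : ((e ⟨f z, ⟨z, rfl⟩⟩ : M) : H) = A z := rfl
      rw [h1, h2]
      exact (hinnAA x z).symm
  refine ⟨star U, ?_⟩
  have hstarUT : star U * T = A := by
    ext x
    apply ext_inner_right ℂ
    intro y
    have l1 : ⟪(adjoint U) (T x), y⟫_ℂ = ⟪T x, U y⟫_ℂ :=
      ContinuousLinearMap.adjoint_inner_left U y (T x)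
    have l2 : ⟪T x, U y⟫_ℂ = ⟪A x, ((M.orthogonalProjectionOnto y : M) : H)⟫_ℂ := hinner x _
    have l3 : ⟪A x, ((M.orthogonalProjectionOnto y : M) : H)⟫_ℂ = ⟪A x, y⟫_ℂ := by
      have hmM : A x ∈ M := R.le_topologicalClosure ⟨x, rfl⟩
      have horth : ⟪y - ((M.orthogonalProjectionOnto y : M) : H), A x⟫_ℂ = 0 :=
          M.starProjection_inner_eq_zero y (A x) hmM
      have hz : ⟪A x, y - ((M.orthogonalProjectionOnto y : M) : H)⟫_ℂ = 0 := by
        rw [← inner_conj_symm, horth, map_zero]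
      rw [inner_sub_right, sub_eq_zero] at hz
      exact hz.symm
    show ⟪(star U) (T x), y⟫_ℂ = ⟪A x, y⟫_ℂ
    rw [ContinuousLinearMap.star_eq_adjoint]
    rw [l1, l2, l3]
  have hUAop : U * A = T := by ext x; exact hUA x
  calc star T = star (U * A) := by rw [hUAop]
    _ = star A * star U := star_mul _ _
    _ = A * star U := by rw [hA.star_eq]
    _ = (star U * T) * star U := by rw [hstarUT]

theorem eventually_ker_projections_close (S : SymmIdeal H)
    (B : H →L[ℂ] H) (Bseq : ℕ → H →L[ℂ] H)
    (Bdag : H →L[ℂ] H) (Bseqdag : ℕ → H →L[ℂ] H)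
    (hBcr : IsClosed (LinearMap.range (B : H →ₗ[ℂ] H) : Set H))
    (hBncr : ∀ n, IsClosed (LinearMap.range (Bseq n : H →ₗ[ℂ] H) : Set H))
    (hB : IsMP B Bdag) (hBn : ∀ n, IsMP (Bseq n) (Bseqdag n))
    (hmem : ∀ n, S.mem (Bseq n - B))
    (hconv : Filter.Tendsto (fun n => S.snorm (Bseq n - B)) Filter.atTop (nhds 0))
    (hdagconv : Filter.Tendsto (fun n => S.snorm (Bseqdag n - Bdag)) Filter.atTop (nhds 0))
    (Pk : H →L[ℂ] H) (Pkn : ℕ → H →L[ℂ] H)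
    (hPk : IsOrthoProjOnto Pk (LinearMap.ker (B : H →ₗ[ℂ] H)))
    (hPkn : ∀ n, IsOrthoProjOnto (Pkn n) (LinearMap.ker (Bseq n : H →ₗ[ℂ] H))) :
    ∀ᶠ n in Filter.atTop, S.snorm (Pkn n - Pk) < 1 := by
  have hPkB : Pk = 1 - Bdag * B := isOrthoProjOnto_unique hPk (mp_ker_proj hB)
  have hPknB : ∀ n, Pkn n = 1 - Bseqdag n * Bseq n :=
    fun n => isOrthoProjOnto_unique (hPkn n) (mp_ker_proj (hBn n))
  have hstarmem : ∀ n, S.mem (star (Bseq n - B)) := by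
    intro n
    obtain ⟨U, hU⟩ := exists_star_factor (Bseq n - B)
    rw [hU]
    exact S.mul_mem_right U (S.mul_mem_left U (hmem n))
  have hXmem : ∀ n, S.mem (Bseqdag n - Bdag) := by
    intro n
    rw [wedin_s8 hB (hBn n)]
    refine S.add_mem (S.add_mem ?_ ?_) ?_
    · exact S.neg_mem (S.mul_mem_right _ (S.mul_mem_left _ (hmem n)))
    · exact S.mul_mem_right _ (S.mul_mem_left _ (hstarmem n))
    · exact S.mul_mem_right _ (S.mul_mem_left _ (hstarmem n))
  have hone : ‖(1 : H →L[ℂ] H)‖ ≤ 1 := by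
    rw [ContinuousLinearMap.one_def]; exact ContinuousLinearMap.norm_id_le
  have hsneg : ∀ {X : H →L[ℂ] H}, S.mem X → S.snorm (-X) ≤ S.snorm X := by
    intro X hX
    have h := S.snorm_symm (-1) 1 X hX
    rw [neg_one_mul, mul_one] at h
    have h2 : ‖(-1 : H →L[ℂ] H)‖ * S.snorm X * ‖(1 : H →L[ℂ] H)‖ ≤ S.snorm X := by
      rw [norm_neg]
      have a0 := norm_nonneg (1 : H →L[ℂ] H)
      have s0 := S.snorm_nonneg X
      have h3 : ‖(1 : H →L[ℂ] H)‖ * S.snorm X * ‖(1 : H →L[ℂ] H)‖ ≤ 1 * S.snorm X * 1 :=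
        mul_le_mul (mul_le_mul_of_nonneg_right hone s0) hone a0 (by linarith)
      calc ‖(1 : H →L[ℂ] H)‖ * S.snorm X * ‖(1 : H →L[ℂ] H)‖ ≤ 1 * S.snorm X * 1 := h3
        _ = S.snorm X := by ring
    linarith
  set c : ℝ := ‖Bdag‖ with hc
  set b : ℝ := ‖B‖ with hb
  have hcn : 0 ≤ c := norm_nonneg _
  have hbn : 0 ≤ b := norm_nonneg _
  set δ : ℝ := 1 / (c + b + 2) with hδ
  have hden : 0 < c + b + 2 := by linarith
  have hδpos : 0 < δ := by positivity
  have hδ1 : δ ≤ 1 := by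
    rw [hδ]
    rw [div_le_one hden]
    linarith
  have hδeq : δ * (c + b + 2) = 1 := by
    rw [hδ]
    field_simp
  have h1 : ∀ᶠ n in atTop, S.snorm (Bseq n - B) < δ := hconv.eventually (gt_mem_nhds hδpos)
  have h2 : ∀ᶠ n in atTop, S.snorm (Bseqdag n - Bdag) < δ :=
    hdagconv.eventually (gt_mem_nhds hδpos)
  filter_upwards [h1, h2] with n hEn hXn
  set E : H →L[ℂ] H := Bseq n - B with hE
  set X : H →L[ℂ] H := Bseqdag n - Bdag with hX
  have hD : Pkn n - Pk = Bdag * (-E) * 1 + 1 * (-X) * Bseq n := by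
    rw [hPkB, hPknB n, hE, hX]
    noncomm_ring
  have tri : S.snorm (Pkn n - Pk)
      ≤ S.snorm (Bdag * (-E) * 1) + S.snorm (1 * (-X) * Bseq n) := by
    rw [hD]; exact S.snorm_triangle _ _
  have t1 := S.snorm_symm Bdag 1 (-E) (S.neg_mem (hmem n))
  have t2 := S.snorm_symm 1 (Bseq n) (-X) (S.neg_mem (hXmem n))
  have hsE : S.snorm (-E) ≤ S.snorm E := hsneg (hmem n)
  have hsX : S.snorm (-X) ≤ S.snorm X := hsneg (hXmem n)
  have hBn_norm : ‖Bseq n‖ ≤ b + 1 := by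
    have hrw : Bseq n = B + E := by rw [hE]; abel
    calc ‖Bseq n‖ = ‖B + E‖ := by rw [← hrw]
      _ ≤ ‖B‖ + ‖E‖ := norm_add_le _ _
      _ ≤ b + S.snorm E := by
          have := S.opNorm_le_snorm (hmem n)
          rw [hb]; exact add_le_add_right this b
      _ ≤ b + 1 := by
          have : S.snorm E < δ := hEn
          linarith
  have k1 : S.snorm (Bdag * (-E) * 1) ≤ c * δ := by
    calc S.snorm (Bdag * (-E) * 1) ≤ ‖Bdag‖ * S.snorm (-E) * ‖(1 : H →L[ℂ] H)‖ := t1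
      _ ≤ ‖Bdag‖ * S.snorm (-E) * 1 := by
          apply mul_le_mul_of_nonneg_left hone
          exact mul_nonneg (norm_nonneg _) (S.snorm_nonneg _)
      _ = c * S.snorm (-E) := by rw [mul_one, hc]
      _ ≤ c * S.snorm E := mul_le_mul_of_nonneg_left hsE hcn
      _ ≤ c * δ := mul_le_mul_of_nonneg_left (le_of_lt hEn) hcn
  have k2 : S.snorm (1 * (-X) * Bseq n) ≤ δ * (b + 1) := by
    calc S.snorm (1 * (-X) * Bseq n) ≤ ‖(1 : H →L[ℂ] H)‖ * S.snorm (-X) * ‖Bseq n‖ := t2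
      _ ≤ 1 * S.snorm (-X) * ‖Bseq n‖ := by
          apply mul_le_mul_of_nonneg_right _ (norm_nonneg _)
          exact mul_le_mul_of_nonneg_right hone (S.snorm_nonneg _)
      _ = S.snorm (-X) * ‖Bseq n‖ := by rw [one_mul]
      _ ≤ S.snorm X * ‖Bseq n‖ := mul_le_mul_of_nonneg_right hsX (norm_nonneg _)
      _ ≤ δ * (b + 1) := by
          apply mul_le_mul (le_of_lt hXn) hBn_norm (norm_nonneg _) (le_of_lt hδpos)
  have : S.snorm (Pkn n - Pk) ≤ c * δ + δ * (b + 1) := le_trans tri (add_le_add k1 k2)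
  nlinarith [hδpos, this, hδeq]
end
end
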